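/- arXiv:1407.0960 — 4 statements merged into one kernel-verified Lean document; each statement's English description precedes it below -/
import Mathlib

section
/- Let (X,d) be a compact metric space, let Y ⊆ X × X be a closed subset, and let μ and ν be Borel probability measures on X. Then there exists a (μ,ν)-coupling π supported on Y if and only if ν(p₁₂^Y(S)) ≥ μ(S) for every closed subset S ⊆ X. (For closed S the set p₁₂^Y(S) is compact, hence closed and Borel.) -/
open MeasureTheory

open Set TopologicalSpace ENNReal NNReal

set_option linter.unusedSectionVars false
set_option maxHeartbeats 1000000

noncomputable section HallContent

variable {Z : Type*} [MetricSpace Z] [CompactSpace Z]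
variable (L : C(Z, ℝ) →ₗ[ℝ] ℝ)

/-- Monotonicity of a positive functional. -/
lemma Lmono (hL : ∀ h : C(Z, ℝ), (∀ z, 0 ≤ h z) → 0 ≤ L h)
    {f g : C(Z, ℝ)} (hfg : ∀ z, f z ≤ g z) : L f ≤ L g := by
  have h0 : 0 ≤ L (g - f) := hL _ (fun z => by simp [sub_nonneg, hfg z])
  have : L (g - f) = L g - L f := by rw [map_sub]
  linarith [this ▸ h0]

/-- The set of test values for the content of `K`. -/
def testVals (K : Set Z) : Set ℝ :=
  L '' {f : C(Z, ℝ) | (∀ z, 0 ≤ f z) ∧ ∀ z ∈ K, 1 ≤ f z}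

lemma testVals_nonempty (K : Set Z) : (testVals L K).Nonempty :=
  ⟨L 1, ⟨1, ⟨fun _ => zero_le_one, fun _ _ => le_refl 1⟩, rfl⟩⟩

lemma testVals_bddBelow (hL : ∀ h : C(Z, ℝ), (∀ z, 0 ≤ h z) → 0 ≤ L h) (K : Set Z) :
    BddBelow (testVals L K) := by
  refine ⟨0, fun x hx => ?_⟩
  obtain ⟨f, hf, rfl⟩ := hx
  exact hL f hf.1

/-- The content value of a set. -/
def contVal (K : Set Z) : ℝ := sInf (testVals L K)

lemma contVal_nonneg (hL : ∀ h : C(Z, ℝ), (∀ z, 0 ≤ h z) → 0 ≤ L h) (K : Set Z) :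
    0 ≤ contVal L K :=
  le_csInf (testVals_nonempty L K) (fun x hx => by
    obtain ⟨f, hf, rfl⟩ := hx; exact hL f hf.1)

lemma contVal_le (hL : ∀ h : C(Z, ℝ), (∀ z, 0 ≤ h z) → 0 ≤ L h) {K : Set Z} {f : C(Z, ℝ)}
    (h0 : ∀ z, 0 ≤ f z) (h1 : ∀ z ∈ K, 1 ≤ f z) : contVal L K ≤ L f :=
  csInf_le (testVals_bddBelow L hL K) ⟨f, ⟨h0, h1⟩, rfl⟩

lemma le_contVal (hL : ∀ h : C(Z, ℝ), (∀ z, 0 ≤ h z) → 0 ≤ L h) {K : Set Z} {f : C(Z, ℝ)}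
    (h1 : ∀ z, f z ≤ 1) (hsupp : ∀ z ∉ K, f z = 0) : L f ≤ contVal L K := by
  refine le_csInf (testVals_nonempty L K) (fun x hx => ?_)
  obtain ⟨g, ⟨hg0, hg1⟩, rfl⟩ := hx
  refine Lmono L hL (fun z => ?_)
  by_cases hz : z ∈ K
  · exact (h1 z).trans (hg1 z hz)
  · rw [hsupp z hz]; exact hg0 z

lemma contVal_mono (hL : ∀ h : C(Z, ℝ), (∀ z, 0 ≤ h z) → 0 ≤ L h) {K₁ K₂ : Set Z}
    (h : K₁ ⊆ K₂) : contVal L K₁ ≤ contVal L K₂ := by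
  refine csInf_le_csInf (testVals_bddBelow L hL K₁) (testVals_nonempty L K₂) ?_
  rintro x ⟨f, ⟨hf0, hf1⟩, rfl⟩
  exact ⟨f, ⟨hf0, fun z hz => hf1 z (h hz)⟩, rfl⟩

lemma exists_testVal_lt (hL : ∀ h : C(Z, ℝ), (∀ z, 0 ≤ h z) → 0 ≤ L h) (K : Set Z)
    {ε : ℝ} (hε : 0 < ε) :
    ∃ f : C(Z, ℝ), (∀ z, 0 ≤ f z) ∧ (∀ z ∈ K, 1 ≤ f z) ∧ L f < contVal L K + ε := by
  obtain ⟨x, hx, hlt⟩ := exists_lt_of_csInf_lt (testVals_nonempty L K)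
    (lt_add_of_pos_right (contVal L K) hε)
  obtain ⟨f, ⟨hf0, hf1⟩, rfl⟩ := hx
  exact ⟨f, hf0, hf1, hlt⟩

lemma contVal_union_le (hL : ∀ h : C(Z, ℝ), (∀ z, 0 ≤ h z) → 0 ≤ L h) (K₁ K₂ : Set Z) :
    contVal L (K₁ ∪ K₂) ≤ contVal L K₁ + contVal L K₂ := by
  refine le_of_forall_pos_le_add (fun ε hε => ?_)
  obtain ⟨f₁, hf₁0, hf₁1, hf₁⟩ := exists_testVal_lt L hL K₁ (half_pos hε)
  obtain ⟨f₂, hf₂0, hf₂1, hf₂⟩ := exists_testVal_lt L hL K₂ (half_pos hε)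
  have : contVal L (K₁ ∪ K₂) ≤ L (f₁ + f₂) := by
    refine contVal_le L hL (fun z => add_nonneg (hf₁0 z) (hf₂0 z)) (fun z hz => ?_)
    rcases hz with hz | hz
    · calc (1:ℝ) ≤ f₁ z := hf₁1 z hz
        _ ≤ f₁ z + f₂ z := le_add_of_nonneg_right (hf₂0 z)
        _ = (f₁ + f₂) z := rfl
    · calc (1:ℝ) ≤ f₂ z := hf₂1 z hz
        _ ≤ f₁ z + f₂ z := le_add_of_nonneg_left (hf₁0 z)
        _ = (f₁ + f₂) z := rfl
  rw [map_add] at this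
  linarith
  
lemma contVal_union_disjoint (hL : ∀ h : C(Z, ℝ), (∀ z, 0 ≤ h z) → 0 ≤ L h) {K₁ K₂ : Set Z}
    (hK₁ : IsClosed K₁) (hK₂ : IsClosed K₂) (hd : Disjoint K₁ K₂) :
    contVal L K₁ + contVal L K₂ ≤ contVal L (K₁ ∪ K₂) := by
  refine le_of_forall_pos_le_add (fun ε hε => ?_)
  obtain ⟨f, hf0, hf1, hflt⟩ := exists_testVal_lt L hL (K₁ ∪ K₂) hε
  obtain ⟨u, hu1, hu0, -, hu01⟩ := exists_continuous_one_zero_of_isCompact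
    (hK₁.isCompact) hK₂ hd
  have h1u : ∀ z, 0 ≤ 1 - u z := fun z => by linarith [(hu01 z).2]
  have hu0' : ∀ z, 0 ≤ u z := fun z => (hu01 z).1
  have key : contVal L K₁ + contVal L K₂ ≤ L (f * u) + L (f * (1 - u)) := by
    gcongr
    · refine contVal_le L hL (fun z => mul_nonneg (hf0 z) (hu0' z)) (fun z hz => ?_)
      have : u z = 1 := hu1 hz
      simp only [ContinuousMap.mul_apply, this, mul_one]
      exact hf1 z (Or.inl hz)
    · refine contVal_le L hL (fun z => mul_nonneg (hf0 z) (h1u z)) (fun z hz => ?_)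
      have : u z = 0 := hu0 hz
      simp only [ContinuousMap.mul_apply, ContinuousMap.sub_apply, ContinuousMap.one_apply, this,
        sub_zero, mul_one]
      exact hf1 z (Or.inr hz)
  have : L (f * u) + L (f * (1 - u)) = L f := by
    rw [← map_add]; congr 1; ring
  rw [this] at key
  linarith

/-- The content associated to a positive linear functional on a compact metric space. -/
def hallContent (hL : ∀ h : C(Z, ℝ), (∀ z, 0 ≤ h z) → 0 ≤ L h) : Content Z where
  toFun K := (contVal L K).toNNReal
  mono' K₁ K₂ h := by
    simpa [Real.toNNReal_le_toNNReal_iff (contVal_nonneg L hL K₂)]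
      using contVal_mono L hL h
  sup_disjoint' K₁ K₂ hd h₁ h₂ := by
    have h1 := contVal_union_disjoint L hL h₁ h₂ hd
    have h2 := contVal_union_le L hL (K₁ : Set Z) K₂
    have heq : contVal L ((K₁ : Set Z) ∪ K₂) = contVal L K₁ + contVal L K₂ := le_antisymm h2 h1
    show (contVal L ((K₁ : Set Z) ∪ (K₂ : Set Z))).toNNReal = _
    rw [heq, Real.toNNReal_add (contVal_nonneg L hL _) (contVal_nonneg L hL _)]
  sup_le' K₁ K₂ := by
    have h2 := contVal_union_le L hL (K₁ : Set Z) K₂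
    show (contVal L ((K₁ : Set Z) ∪ (K₂ : Set Z))).toNNReal ≤ _
    calc (contVal L ((K₁ : Set Z) ∪ (K₂ : Set Z))).toNNReal
        ≤ (contVal L K₁ + contVal L K₂).toNNReal := Real.toNNReal_le_toNNReal h2
      _ = _ := Real.toNNReal_add (contVal_nonneg L hL _) (contVal_nonneg L hL _)

lemma hallContent_apply (hL : ∀ h : C(Z, ℝ), (∀ z, 0 ≤ h z) → 0 ≤ L h) (K : Compacts Z) :
    hallContent L hL K = ENNReal.ofReal (contVal L (K : Set Z)) := rfl

end HallContent


noncomputable section HallMeasure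

variable {Z : Type*} [MetricSpace Z] [CompactSpace Z] [MeasurableSpace Z] [BorelSpace Z]
variable (L : C(Z, ℝ) →ₗ[ℝ] ℝ) (hL : ∀ h : C(Z, ℝ), (∀ z, 0 ≤ h z) → 0 ≤ L h)

/-- The measure associated to the content of a positive linear functional. -/
def hallMeasure : Measure Z := (hallContent L hL).measure

lemma hallMeasure_open {U : Set Z} (hU : IsOpen U) :
    hallMeasure L hL U
      = ⨆ (K : Compacts Z) (_ : (K : Set Z) ⊆ U), ENNReal.ofReal (contVal L (K : Set Z)) := by
  rw [hallMeasure, Content.measure_apply _ hU.measurableSet,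
    (hallContent L hL).outerMeasure_of_isOpen U hU]
  show (hallContent L hL).innerContent ⟨U, hU⟩ = _
  rw [Content.innerContent]
  exact iSup_congr (fun K => iSup_congr (fun _ => hallContent_apply L hL K))

lemma hallMeasure_open_le {U : Set Z} (hU : IsOpen U) {r : ℝ}
    (h : ∀ K : Set Z, IsCompact K → K ⊆ U → contVal L K ≤ r) :
    hallMeasure L hL U ≤ ENNReal.ofReal r := by
  rw [hallMeasure_open L hL hU]
  exact iSup₂_le (fun K hK => ENNReal.ofReal_le_ofReal (h K K.2 hK))

lemma le_hallMeasure {C U : Set Z} (hC : IsCompact C) (hU : IsOpen U) (hCU : C ⊆ U) :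
    ENNReal.ofReal (contVal L C) ≤ hallMeasure L hL U := by
  rw [hallMeasure_open L hL hU]
  exact le_iSup₂ (f := fun (K : Compacts Z) (_ : (K : Set Z) ⊆ U) =>
    ENNReal.ofReal (contVal L (K : Set Z))) (⟨C, hC⟩ : Compacts Z) hCU

variable {X : Type*} [MetricSpace X] [CompactSpace X] [MeasurableSpace X] [BorelSpace X]

lemma hallMeasure_marginal (φ : C(Z, X)) (μ : Measure X) [IsProbabilityMeasure μ]
    (hLφ : ∀ f : C(X, ℝ), L (f.comp φ) = ∫ x, f x ∂μ) {U : Set X} (hU : IsOpen U) :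
    hallMeasure L hL (φ ⁻¹' U) = μ U := by
  have hint : ∀ f : C(X, ℝ), Integrable f μ := fun f =>
    f.continuous.integrable_of_hasCompactSupport (HasCompactSupport.of_compactSpace _)
  refine le_antisymm ?_ ?_
  · -- upper bound
    have h1 : hallMeasure L hL (φ ⁻¹' U) ≤ ENNReal.ofReal (μ U).toReal := by
      refine hallMeasure_open_le L hL (hU.preimage φ.continuous) ?_
      intro C hC hCU
      have hK : IsCompact (φ '' C) := hC.image φ.continuous
      have hKU : φ '' C ⊆ U := by rintro x ⟨z, hz, rfl⟩; exact hCU hz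
      obtain ⟨V, hV, hKV, hVU⟩ := normal_exists_closure_subset hK.isClosed hU hKU
      obtain ⟨f, hf1, hf0, -, hf01⟩ := exists_continuous_one_zero_of_isCompact hK
        (isClosed_compl_iff.mpr hV) (disjoint_compl_right_iff_subset.mpr hKV)
      have step1 : contVal L C ≤ L (f.comp φ) := by
        refine contVal_le L hL (fun z => (hf01 (φ z)).1) (fun z hz => ?_)
        have : f (φ z) = 1 := hf1 (mem_image_of_mem φ hz)
        simp [ContinuousMap.comp_apply, this]
      have step2 : (∫ x, f x ∂μ) ≤ (μ U).toReal := by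
        have hle : ∀ x, f x ≤ (closure V).indicator (fun _ => (1:ℝ)) x := by
          intro x
          by_cases hx : x ∈ closure V
          · simp [indicator_of_mem hx, (hf01 x).2]
          · have : f x = 0 := hf0 (fun hxV => hx (subset_closure hxV))
            simp [indicator_of_notMem hx, this]
        calc (∫ x, f x ∂μ) ≤ ∫ x, (closure V).indicator (fun _ => (1:ℝ)) x ∂μ := by
              refine integral_mono (hint f) ?_ hle
              exact (integrable_indicator_iff isClosed_closure.measurableSet).mpr
                ((integrableOn_const_iff).mpr (Or.inr (measure_lt_top μ _)))
          _ = (μ (closure V)).toReal := by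
              rw [integral_indicator_const _ isClosed_closure.measurableSet]; simp; rfl
          _ ≤ (μ U).toReal := by
              refine ENNReal.toReal_mono (measure_ne_top μ _) (measure_mono hVU)
      calc contVal L C ≤ L (f.comp φ) := step1
        _ = ∫ x, f x ∂μ := hLφ f
        _ ≤ (μ U).toReal := step2
    rwa [ENNReal.ofReal_toReal (measure_ne_top μ U)] at h1
  · -- lower bound
    rw [hU.measure_eq_iSup_isCompact]
    refine iSup₂_le fun K hKU => iSup_le fun hK => ?_
    obtain ⟨V, hV, hKV, hVU⟩ := normal_exists_closure_subset hK.isClosed hU hKU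
    obtain ⟨f, hf1, hf0, -, hf01⟩ := exists_continuous_one_zero_of_isCompact hK
      (isClosed_compl_iff.mpr hV) (disjoint_compl_right_iff_subset.mpr hKV)
    have step1 : (μ K).toReal ≤ ∫ x, f x ∂μ := by
      have hle : ∀ x, K.indicator (fun _ => (1:ℝ)) x ≤ f x := by
        intro x
        by_cases hx : x ∈ K
        · simp [indicator_of_mem hx, hf1 hx]
        · simp [indicator_of_notMem hx, (hf01 x).1]
      calc (μ K).toReal = ∫ x, K.indicator (fun _ => (1:ℝ)) x ∂μ := by
            rw [integral_indicator_const _ hK.isClosed.measurableSet]; simp; rfl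
        _ ≤ ∫ x, f x ∂μ := by
            refine integral_mono ?_ (hint f) hle
            exact (integrable_indicator_iff hK.isClosed.measurableSet).mpr
              ((integrableOn_const_iff).mpr (Or.inr (measure_lt_top μ _)))
    have step2 : L (f.comp φ) ≤ contVal L (φ ⁻¹' closure V) := by
      refine le_contVal L hL (fun z => (hf01 (φ z)).2) (fun z hz => ?_)
      refine hf0 (fun hzV : φ z ∈ V => hz ?_)
      exact mem_preimage.mpr (subset_closure hzV)
    have hCcompact : IsCompact (φ ⁻¹' closure V) :=
      (isClosed_closure.preimage φ.continuous).isCompact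
    have hCsub : φ ⁻¹' closure V ⊆ φ ⁻¹' U := preimage_mono hVU
    calc μ K = ENNReal.ofReal (μ K).toReal := (ENNReal.ofReal_toReal (measure_ne_top μ K)).symm
      _ ≤ ENNReal.ofReal (contVal L (φ ⁻¹' closure V)) := by
          refine ENNReal.ofReal_le_ofReal (step1.trans ?_)
          rw [← hLφ f]; exact step2
      _ ≤ hallMeasure L hL (φ ⁻¹' U) :=
          le_hallMeasure L hL hCcompact (hU.preimage φ.continuous) hCsub

end HallMeasure


section KeyIneq

variable {X : Type*} [MetricSpace X] [CompactSpace X] [MeasurableSpace X] [BorelSpace X]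
variable {Y : Set (X × X)} (hY : IsClosed Y) (hYne : Y.Nonempty)
variable {μ ν : Measure X} [IsProbabilityMeasure μ] [IsProbabilityMeasure ν]
variable (hall : ∀ S : Set X, IsClosed S → μ S ≤ ν {y | ∃ x ∈ S, (x, y) ∈ Y})

include hY hYne hall in
/-- Key inequality, nonnegative case. -/
lemma key_ineq_nn (f g : C(X, ℝ)) (hf : ∀ x, 0 ≤ f x) (hg : ∀ x, 0 ≤ g x) :
    ∫ x, f x ∂μ + ∫ y, g y ∂ν ≤ sSup ((fun z => f z.1 + g z.2) '' Y) := by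
  set c := sSup ((fun z => f z.1 + g z.2) '' Y) with hc
  have hbdd : BddAbove ((fun z => f z.1 + g z.2) '' Y) := by
    refine (hY.isCompact.image (by fun_prop)).bddAbove
  have hc0 : 0 ≤ c := by
    obtain ⟨z, hz⟩ := hYne
    have := le_csSup hbdd (mem_image_of_mem _ hz)
    have h0 : (0:ℝ) ≤ f z.1 + g z.2 := add_nonneg (hf _) (hg _)
    linarith
  -- Step 3: Hall-type bound
  have step3 : ∀ t : ℝ, μ {x | t ≤ f x} ≤ ν {y | g y ≤ c - t} := by
    intro t
    have hScl : IsClosed {x | t ≤ f x} := isClosed_le continuous_const f.continuous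
    refine (hall _ hScl).trans (measure_mono ?_)
    rintro y ⟨x, hxS, hxy⟩
    have h1 : f x + g y ≤ c := le_csSup hbdd (mem_image_of_mem _ hxy)
    have h2 : t ≤ f x := hxS
    simpa using by linarith
  -- Step 4: ν {s < g} = 0 for s ≥ c
  have step4 : ∀ s : ℝ, c ≤ s → ν {y | s < g y} = 0 := by
    intro s hs
    have h1 : μ {x | c - s ≤ f x} = 1 := by
      have : {x | c - s ≤ f x} = univ := by
        ext x; simp only [mem_setOf_eq, mem_univ, iff_true]
        have := hf x; linarith
      rw [this]; exact measure_univ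
    have h2 : ν {y | g y ≤ c - (c - s)} = 1 := by
      refine le_antisymm prob_le_one ?_
      rw [← h1]; exact step3 (c - s)
    have hset : {y | s < g y} = {y | g y ≤ c - (c - s)}ᶜ := by
      ext y; simp only [mem_setOf_eq, mem_compl_iff, not_le]; constructor <;> intro h <;> linarith
    rw [hset, prob_compl_eq_zero_iff
      (isClosed_le g.continuous continuous_const).measurableSet]
    exact h2
  -- integrability of continuous functions
  have hint : ∀ (h : C(X, ℝ)) (ρ : Measure X) [IsProbabilityMeasure ρ], Integrable h ρ :=
    fun h ρ _ => h.continuous.integrable_of_hasCompactSupport (HasCompactSupport.of_compactSpace _)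
  -- g ≤ c a.e.
  have hgc : g ≤ᵐ[ν] fun _ => c := by
    have h0 := step4 c le_rfl
    refine ae_iff.mpr ?_
    simpa only [not_le] using h0
  -- definitions
  set nts : ℝ → ℝ := fun s => (ν {y | s < g y}).toReal with hnts
  have hn_anti : Antitone nts := by
    intro s s' hss'
    refine ENNReal.toReal_mono (measure_ne_top ν _) (measure_mono ?_)
    intro y hy; exact lt_of_le_of_lt hss' hy
  have hn0 : ∀ s, 0 ≤ nts s := fun s => ENNReal.toReal_nonneg
  have hn1 : ∀ s, nts s ≤ 1 := by
    intro s
    have h : ν {y | s < g y} ≤ 1 := prob_le_one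
    calc nts s ≤ (1:ℝ≥0∞).toReal := ENNReal.toReal_mono ENNReal.one_ne_top h
      _ = 1 := by simp
  have hn_neg : ∀ s : ℝ, s < 0 → nts s = 1 := by
    intro s hs
    have : {y | s < g y} = univ := by
      ext y; simp only [mem_setOf_eq, mem_univ, iff_true]; exact lt_of_lt_of_le hs (hg y)
    simp [hnts, this]
  have hn_c : ∀ s : ℝ, c ≤ s → nts s = 0 := fun s hs => by simp [hnts, step4 s hs]
  set m : ℝ → ℝ := fun t => (μ {x | t ≤ f x}).toReal with hm
  have hm_anti : Antitone m := by
    intro t t' htt'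
    refine ENNReal.toReal_mono (measure_ne_top μ _) (measure_mono ?_)
    intro x hx; exact le_trans htt' hx
  have hm_le : ∀ t, m t ≤ 1 - nts (c - t) := by
    intro t
    have h1 : ν {y | g y ≤ c - t} + ν {y | c - t < g y} = 1 := by
      have hcompl : {y | c - t < g y} = {y | g y ≤ c - t}ᶜ := by
        ext y; simp [not_le]
      rw [hcompl, measure_add_measure_compl
        (isClosed_le g.continuous continuous_const).measurableSet]
      exact measure_univ
    have h2 : (ν {y | g y ≤ c - t}).toReal = 1 - nts (c - t) := by
      have := congrArg ENNReal.toReal h1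
      rw [ENNReal.toReal_add (measure_ne_top ν _) (measure_ne_top ν _)] at this
      simp only [ENNReal.toReal_one] at this
      simp only [hnts]; linarith
    calc m t ≤ (ν {y | g y ≤ c - t}).toReal :=
          ENNReal.toReal_mono (measure_ne_top ν _) (step3 t)
      _ = 1 - nts (c - t) := h2
  -- bound M
  obtain ⟨Mf, hMf⟩ := (isCompact_univ.image f.continuous).bddAbove
  have hMf' : ∀ x, f x ≤ Mf := fun x => hMf (mem_image_of_mem _ (mem_univ x))
  set M : ℝ := max c Mf with hM
  have hcM : c ≤ M := le_max_left _ _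
  have h0M : (0:ℝ) ≤ M := hc0.trans hcM
  have hfM : ∀ x, f x ≤ M := fun x => (hMf' x).trans (le_max_right _ _)
  -- layer cake for f
  have hf_int : ∫ x, f x ∂μ = ∫ t in Ioc (0:ℝ) M, m t :=
    (hint f μ).integral_eq_integral_Ioc_meas_le (Filter.Eventually.of_forall hf)
      (Filter.Eventually.of_forall hfM)
  -- layer cake for g
  have hg_int : ∫ y, g y ∂ν = ∫ s in Ioc (0:ℝ) c, nts s := by
    rw [(hint g ν).integral_eq_integral_Ioc_meas_le (Filter.Eventually.of_forall hg) hgc]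
    refine integral_congr_ae ?_
    have haux := meas_le_ae_eq_meas_lt (μ := ν) (volume : Measure ℝ) (fun y => g y)
    filter_upwards [ae_restrict_of_ae haux] with s hs
    simp only [hnts]; rw [measureReal_def, hs]
  -- interval integrability facts
  have int_m : IntervalIntegrable m volume 0 M := hm_anti.intervalIntegrable
  have hmono_shift : Antitone (fun t : ℝ => 1 - nts (c - t)) := by
    intro t t' htt'
    have h := hn_anti (show c - t' ≤ c - t by linarith)
    show 1 - nts (c - t') ≤ 1 - nts (c - t)
    linarith
  have int_shift : IntervalIntegrable (fun t : ℝ => 1 - nts (c - t)) volume 0 M :=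
    hmono_shift.intervalIntegrable
  have int_nshift : IntervalIntegrable (fun t : ℝ => nts (c - t)) volume 0 M := by
    have : Monotone (fun t : ℝ => nts (c - t)) := fun t t' htt' => hn_anti (by linarith)
    exact this.intervalIntegrable
  -- main estimate
  have hstep : ∫ t in Ioc (0:ℝ) M, m t ≤ M - ∫ t in (0:ℝ)..M, nts (c - t) := by
    have h1 : ∫ t in Ioc (0:ℝ) M, m t = ∫ t in (0:ℝ)..M, m t :=
      (intervalIntegral.integral_of_le h0M).symm
    have h2 : ∫ t in (0:ℝ)..M, m t ≤ ∫ t in (0:ℝ)..M, (1 - nts (c - t)) := by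
      refine intervalIntegral.integral_mono_on h0M int_m int_shift ?_
      exact fun t _ => hm_le t
    have h3 : ∫ t in (0:ℝ)..M, (1 - nts (c - t))
        = M - ∫ t in (0:ℝ)..M, nts (c - t) := by
      rw [intervalIntegral.integral_sub intervalIntegrable_const int_nshift,
        intervalIntegral.integral_const]
      simp
    linarith
  -- change of variables
  have hcov : ∫ t in (0:ℝ)..M, nts (c - t) = ∫ s in (c - M)..c, nts s := by
    have := intervalIntegral.integral_comp_sub_left (a := (0:ℝ)) (b := M) nts c
    simpa using this
  -- split the interval
  have int_n1 : IntervalIntegrable nts volume (c - M) 0 := hn_anti.intervalIntegrable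
  have int_n2 : IntervalIntegrable nts volume 0 c := hn_anti.intervalIntegrable
  have hsplit : ∫ s in (c - M)..c, nts s
      = (∫ s in (c - M)..(0:ℝ), nts s) + ∫ s in (0:ℝ)..c, nts s :=
    (intervalIntegral.integral_add_adjacent_intervals int_n1 int_n2).symm
  -- first piece equals M - c
  have hpiece1 : ∫ s in (c - M)..(0:ℝ), nts s = M - c := by
    rw [intervalIntegral.integral_of_le (by linarith : c - M ≤ 0)]
    have hae : ∀ᵐ s : ℝ ∂(volume.restrict (Ioc (c - M) 0)), nts s = 1 := by
      have hzero : ∀ᵐ s : ℝ ∂(volume : Measure ℝ), s ≠ 0 := by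
        refine ae_iff.mpr ?_
        have : {s : ℝ | ¬ s ≠ 0} = {0} := by ext s; simp
        rw [this]; exact measure_singleton 0
      filter_upwards [ae_restrict_of_ae hzero, ae_restrict_mem measurableSet_Ioc] with s hs hmem
      exact hn_neg s (lt_of_le_of_ne hmem.2 hs)
    rw [integral_congr_ae hae]
    simp [Real.volume_Ioc]
    linarith
  -- second piece is ∫ g dν
  have hpiece2 : ∫ s in (0:ℝ)..c, nts s = ∫ y, g y ∂ν := by
    rw [intervalIntegral.integral_of_le hc0, ← hg_int]
  have := hf_int ▸ hstep
  rw [hcov, hsplit, hpiece1, hpiece2] at this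
  linarith

include hY hYne hall in
/-- Key inequality, general case. -/
lemma key_ineq (f g : C(X, ℝ)) :
    ∫ x, f x ∂μ + ∫ y, g y ∂ν ≤ sSup ((fun z => f z.1 + g z.2) '' Y) := by
  have hint : ∀ (h : C(X, ℝ)) (ρ : Measure X) [IsProbabilityMeasure ρ], Integrable h ρ :=
    fun h ρ _ => h.continuous.integrable_of_hasCompactSupport (HasCompactSupport.of_compactSpace _)
  set f' : C(X, ℝ) := f + ContinuousMap.const X ‖f‖ with hf'
  set g' : C(X, ℝ) := g + ContinuousMap.const X ‖g‖ with hg'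
  have hbd : ∀ (h : C(X, ℝ)) (x : X), |h x| ≤ ‖h‖ := fun h x => h.norm_coe_le_norm x
  have hf'0 : ∀ x, 0 ≤ f' x := fun x => by
    have := (abs_le.mp (hbd f x)).1
    simp only [hf', ContinuousMap.add_apply, ContinuousMap.const_apply]
    linarith
  have hg'0 : ∀ x, 0 ≤ g' x := fun x => by
    have := (abs_le.mp (hbd g x)).1
    simp only [hg', ContinuousMap.add_apply, ContinuousMap.const_apply]
    linarith
  have hmain := key_ineq_nn hY hYne hall f' g' hf'0 hg'0
  set k : ℝ := ‖f‖ + ‖g‖ with hk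
  -- integrals shift
  have hif : ∫ x, f' x ∂μ = (∫ x, f x ∂μ) + ‖f‖ := by
    simp only [hf', ContinuousMap.add_apply, ContinuousMap.const_apply]
    rw [integral_add (hint f μ) (integrable_const _)]
    simp
  have hig : ∫ y, g' y ∂ν = (∫ y, g y ∂ν) + ‖g‖ := by
    simp only [hg', ContinuousMap.add_apply, ContinuousMap.const_apply]
    rw [integral_add (hint g ν) (integrable_const _)]
    simp
  -- sSup shift
  have himg : (fun z : X × X => f' z.1 + g' z.2) '' Y
      = (fun r => r + k) '' ((fun z : X × X => f z.1 + g z.2) '' Y) := by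
    rw [image_image]
    refine image_congr (fun z _ => ?_)
    simp only [hf', hg', hk, ContinuousMap.add_apply, ContinuousMap.const_apply]
    ring
  have hbdd : BddAbove ((fun z : X × X => f z.1 + g z.2) '' Y) :=
    (hY.isCompact.image (by fun_prop)).bddAbove
  have hne : ((fun z : X × X => f z.1 + g z.2) '' Y).Nonempty := hYne.image _
  have hshift : sSup ((fun z : X × X => f' z.1 + g' z.2) '' Y)
      = sSup ((fun z : X × X => f z.1 + g z.2) '' Y) + k := by
    rw [himg]
    refine le_antisymm (csSup_le (hne.image _) ?_) ?_
    · rintro r ⟨r', hr', rfl⟩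
      exact (add_le_add_iff_right k).mpr (le_csSup hbdd hr')
    · obtain ⟨u, hu⟩ := hbdd
      have hbdd' : BddAbove ((fun r => r + k) '' ((fun z : X × X => f z.1 + g z.2) '' Y)) := by
        refine ⟨u + k, ?_⟩
        rintro r ⟨r', hr', rfl⟩
        exact (add_le_add_iff_right k).mpr (hu hr')
      have : ∀ r ∈ (fun z : X × X => f z.1 + g z.2) '' Y,
          r ≤ sSup ((fun r => r + k) '' ((fun z : X × X => f z.1 + g z.2) '' Y)) - k := by
        intro r hr
        have := le_csSup hbdd' (mem_image_of_mem _ hr)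
        linarith
      have h2 := csSup_le hne this
      linarith
  rw [hif, hig] at hmain
  rw [hshift] at hmain
  simp only [hk] at hmain
  linarith

end KeyIneq


section HB
variable {X : Type*} [MetricSpace X] [CompactSpace X] [MeasurableSpace X] [BorelSpace X]
variable {Y : Set (X × X)} (hY : IsClosed Y) (hYne : Y.Nonempty)
variable {μ ν : Measure X} [IsProbabilityMeasure μ] [IsProbabilityMeasure ν]
variable (hall : ∀ S : Set X, IsClosed S → μ S ≤ ν {y | ∃ x ∈ S, (x, y) ∈ Y})

include hY hYne hall in
lemma exists_functional : ∃ L : C(X × X, ℝ) →ₗ[ℝ] ℝ,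
    (∀ h : C(X × X, ℝ), (∀ z, 0 ≤ h z) → 0 ≤ L h) ∧
    (∀ f : C(X, ℝ), L (f.comp ⟨Prod.fst, continuous_fst⟩) = ∫ x, f x ∂μ) ∧
    (∀ f : C(X, ℝ), L (f.comp ⟨Prod.snd, continuous_snd⟩) = ∫ y, f y ∂ν) ∧
    (∀ h : C(X × X, ℝ), L h ≤ sSup ((fun z => h z) '' Y)) := by
  obtain ⟨z0, hz0⟩ := hYne
  have hint : ∀ (h : C(X, ℝ)) (ρ : Measure X) [IsProbabilityMeasure ρ], Integrable h ρ :=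
    fun h ρ _ => h.continuous.integrable_of_hasCompactSupport (HasCompactSupport.of_compactSpace _)
  set fstm : C(X × X, X) := ⟨Prod.fst, continuous_fst⟩ with hfstm
  set sndm : C(X × X, X) := ⟨Prod.snd, continuous_snd⟩ with hsndm
  -- the subspace map
  set T : (C(X, ℝ) × C(X, ℝ)) →ₗ[ℝ] C(X × X, ℝ) :=
    { toFun := fun p => p.1.comp fstm + p.2.comp sndm
      map_add' := by intro p q; ext z; simp; ring
      map_smul' := by intro c p; ext z; simp } with hT
  have hTapp : ∀ (p : C(X, ℝ) × C(X, ℝ)) (z : X × X), T p z = p.1 z.1 + p.2 z.2 := by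
    intro p z; simp [hT, hfstm, hsndm]
  -- the functional on the subspace
  set L₀ : (C(X, ℝ) × C(X, ℝ)) →ₗ[ℝ] ℝ :=
    { toFun := fun p => ∫ x, p.1 x ∂μ + ∫ y, p.2 y ∂ν
      map_add' := by
        intro p q
        simp only [Prod.fst_add, Prod.snd_add, ContinuousMap.coe_add, Pi.add_apply]
        rw [integral_add (hint p.1 μ) (hint q.1 μ), integral_add (hint p.2 ν) (hint q.2 ν)]
        ring
      map_smul' := by
        intro c p
        simp only [Prod.smul_fst, Prod.smul_snd, ContinuousMap.coe_smul, Pi.smul_apply,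
          smul_eq_mul, RingHom.id_apply]
        rw [integral_const_mul, integral_const_mul]
        ring } with hL₀
  have hker : LinearMap.ker T ≤ LinearMap.ker L₀ := by
    intro p hp
    have hz : ∀ z : X × X, p.1 z.1 + p.2 z.2 = 0 := by
      intro z
      have := DFunLike.congr_fun (LinearMap.mem_ker.mp hp) z
      rwa [hTapp] at this
    have h1 : ∀ x, p.1 x = -p.2 z0.2 := fun x => by have := hz (x, z0.2); simp at this; linarith
    have h2 : ∀ y, p.2 y = p.2 z0.2 := fun y => by
      have := hz (z0.1, y); have h3 := h1 z0.1; simp at this ⊢; linarith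
    have hi1 : ∫ x, p.1 x ∂μ = -p.2 z0.2 := by
      rw [integral_congr_ae (ae_of_all μ h1)]; simp
    have hi2 : ∫ y, p.2 y ∂ν = p.2 z0.2 := by
      rw [integral_congr_ae (ae_of_all ν h2)]; simp
    rw [LinearMap.mem_ker]
    show (∫ x, p.1 x ∂μ) + ∫ y, p.2 y ∂ν = 0
    rw [hi1, hi2]; ring
  set φ : ↥(LinearMap.range T) →ₗ[ℝ] ℝ :=
    ((LinearMap.ker T).liftQ L₀ hker).comp T.quotKerEquivRange.symm.toLinearMap with hφ
  have hφapp : ∀ p : C(X, ℝ) × C(X, ℝ), φ ⟨T p, LinearMap.mem_range_self T p⟩ = L₀ p := by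
    intro p
    simp only [hφ, LinearMap.comp_apply, LinearEquiv.coe_toLinearMap]
    rw [LinearMap.quotKerEquivRange_symm_apply_image T p (LinearMap.mem_range_self T p)]
    exact Submodule.liftQ_apply _ L₀ p
  -- the sublinear functional
  set N : C(X × X, ℝ) → ℝ := fun h => sSup ((fun z => h z) '' Y) with hN
  have hbddN : ∀ h : C(X × X, ℝ), BddAbove ((fun z => h z) '' Y) := fun h =>
    (hY.isCompact.image h.continuous).bddAbove
  have hneN : ∀ h : C(X × X, ℝ), ((fun z => h z) '' Y).Nonempty := fun h => ⟨h z0, z0, hz0, rfl⟩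
  have N_hom : ∀ c : ℝ, 0 < c → ∀ h : C(X × X, ℝ), N (c • h) = c * N h := by
    intro c hc h
    have him : (fun z => (c • h) z) '' Y = (fun r => c * r) '' ((fun z => h z) '' Y) := by
      rw [image_image]; exact image_congr (fun z _ => by simp)
    show sSup ((fun z => (c • h) z) '' Y) = c * sSup ((fun z => h z) '' Y)
    rw [him]
    refine le_antisymm (csSup_le ((hneN h).image _) ?_) ?_
    · rintro r ⟨r', hr', rfl⟩
      exact mul_le_mul_of_nonneg_left (le_csSup (hbddN h) hr') hc.le
    · have hbdd' : BddAbove ((fun r => c * r) '' ((fun z => h z) '' Y)) := by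
        obtain ⟨u, hu⟩ := hbddN h
        refine ⟨c * u, ?_⟩
        rintro r ⟨r', hr', rfl⟩
        show c * r' ≤ c * u
        exact mul_le_mul_of_nonneg_left (hu hr') hc.le
      have hS : sSup ((fun z => h z) '' Y)
          ≤ sSup ((fun r => c * r) '' ((fun z => h z) '' Y)) / c := by
        refine csSup_le (hneN h) (fun r hr => ?_)
        rw [le_div_iff₀ hc, mul_comm]
        exact le_csSup hbdd' (mem_image_of_mem _ hr)
      calc c * sSup ((fun z => h z) '' Y)
          ≤ c * (sSup ((fun r => c * r) '' ((fun z => h z) '' Y)) / c) :=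
            mul_le_mul_of_nonneg_left hS hc.le
        _ = _ := by field_simp
  have N_add : ∀ h₁ h₂ : C(X × X, ℝ), N (h₁ + h₂) ≤ N h₁ + N h₂ := by
    intro h₁ h₂
    refine csSup_le (hneN _) ?_
    rintro r ⟨z, hz, rfl⟩
    have e1 := le_csSup (hbddN h₁) (mem_image_of_mem (fun z => h₁ z) hz)
    have e2 := le_csSup (hbddN h₂) (mem_image_of_mem (fun z => h₂ z) hz)
    simp only [ContinuousMap.add_apply]
    exact add_le_add e1 e2
  -- bound on the subspace
  have hbound : ∀ x : ↥(LinearMap.range T), φ x ≤ N x := by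
    rintro ⟨v, hv⟩
    obtain ⟨p, rfl⟩ := hv
    rw [hφapp p]
    show (∫ x, p.1 x ∂μ) + ∫ y, p.2 y ∂ν ≤ N (T p)
    have heq : N (T p) = sSup ((fun z => p.1 z.1 + p.2 z.2) '' Y) := by
      show sSup ((fun z => (T p) z) '' Y) = _
      exact congrArg sSup (image_congr (fun z _ => hTapp p z))
    rw [heq]
    exact key_ineq hY ⟨z0, hz0⟩ hall p.1 p.2
  obtain ⟨L, hLext, hLle⟩ :=
    exists_extension_of_le_sublinear ⟨LinearMap.range T, φ⟩ N N_hom N_add hbound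
  have hLdom : ∀ p : C(X, ℝ) × C(X, ℝ), L (T p) = L₀ p := by
    intro p
    have := hLext ⟨T p, LinearMap.mem_range_self T p⟩
    rw [this]
    exact hφapp p
  refine ⟨L, ?_, ?_, ?_, fun h => hLle h⟩
  · intro h hh
    have h1 : L (-h) ≤ N (-h) := hLle (-h)
    have h2 : N (-h) ≤ 0 := csSup_le (hneN _) (by rintro r ⟨z, hz, rfl⟩; simpa using hh z)
    rw [map_neg] at h1
    linarith
  · intro f
    have hTf : T (f, 0) = f.comp fstm := by
      ext z; simp [hTapp]; rfl
    have := hLdom (f, 0)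
    rw [hTf] at this
    rw [this]
    show (∫ x, f x ∂μ) + ∫ y, (0:C(X,ℝ)) y ∂ν = _
    simp
  · intro f
    have hTf : T (0, f) = f.comp sndm := by
      ext z; simp [hTapp]; rfl
    have := hLdom (0, f)
    rw [hTf] at this
    rw [this]
    show (∫ x, (0:C(X,ℝ)) x ∂μ) + ∫ y, f y ∂ν = _
    simp

end HB


/-- **A continuous Hall theorem.** Let `(X,d)` be a compact metric space, `Y ⊆ X × X` a
closed subset, and `μ, ν` Borel probability measures on `X`. There exists a `(μ,ν)`-coupling
`π` supported on `Y` if and only if `ν (p₁₂^Y S) ≥ μ S` for every closed `S ⊆ X`. -/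
theorem stmt_0 {X : Type*} [MetricSpace X] [CompactSpace X]
    [MeasurableSpace X] [BorelSpace X]
    (Y : Set (X × X)) (hY : IsClosed Y)
    (μ ν : Measure X) [IsProbabilityMeasure μ] [IsProbabilityMeasure ν] :
    (∃ π : Measure (X × X), IsProbabilityMeasure π ∧
        π.map Prod.fst = μ ∧ π.map Prod.snd = ν ∧ π Yᶜ = 0) ↔
      ∀ S : Set X, IsClosed S → μ S ≤ ν {y | ∃ x ∈ S, (x, y) ∈ Y} := by
  constructor
  · rintro ⟨π, hπ, hfst, hsnd, hsupp⟩ S hS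
    have hC : IsClosed (Y ∩ Prod.fst ⁻¹' S) := hY.inter (hS.preimage continuous_fst)
    have hP : IsCompact (Prod.snd '' (Y ∩ Prod.fst ⁻¹' S)) :=
      (hC.isCompact.image continuous_snd)
    have hPeq : {y | ∃ x ∈ S, (x, y) ∈ Y} = Prod.snd '' (Y ∩ Prod.fst ⁻¹' S) := by
      ext y
      constructor
      · rintro ⟨x, hxS, hxy⟩
        exact ⟨(x, y), ⟨hxy, hxS⟩, rfl⟩
      · rintro ⟨z, ⟨hzY, hzS⟩, rfl⟩
        exact ⟨z.1, hzS, hzY⟩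
    have h1 : μ S = π (Prod.fst ⁻¹' S) := by
      rw [← hfst, Measure.map_apply measurable_fst hS.measurableSet]
    have h2 : π (Prod.fst ⁻¹' S) ≤ π (Prod.fst ⁻¹' S ∩ Y) := by
      calc π (Prod.fst ⁻¹' S) = π ((Prod.fst ⁻¹' S ∩ Y) ∪ (Prod.fst ⁻¹' S ∩ Yᶜ)) := by
            rw [← inter_union_distrib_left, union_compl_self, inter_univ]
        _ ≤ π (Prod.fst ⁻¹' S ∩ Y) + π (Prod.fst ⁻¹' S ∩ Yᶜ) := measure_union_le _ _
        _ ≤ π (Prod.fst ⁻¹' S ∩ Y) + π Yᶜ := by gcongr; exact inter_subset_right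
        _ = π (Prod.fst ⁻¹' S ∩ Y) := by rw [hsupp, add_zero]
    have h3 : π (Prod.fst ⁻¹' S ∩ Y) ≤ ν {y | ∃ x ∈ S, (x, y) ∈ Y} := by
      rw [← hsnd, Measure.map_apply measurable_snd (hPeq ▸ hP.isClosed.measurableSet)]
      refine measure_mono ?_
      rintro ⟨x, y⟩ ⟨hxS, hxy⟩
      rw [hPeq]
      exact ⟨(x, y), ⟨hxy, hxS⟩, rfl⟩
    calc μ S = π (Prod.fst ⁻¹' S) := h1
      _ ≤ π (Prod.fst ⁻¹' S ∩ Y) := h2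
      _ ≤ ν {y | ∃ x ∈ S, (x, y) ∈ Y} := h3
  · intro hall
    have hYne : Y.Nonempty := by
      by_contra hne
      rw [Set.not_nonempty_iff_eq_empty] at hne
      have h1 := hall univ isClosed_univ
      rw [measure_univ] at h1
      have h2 : {y | ∃ x ∈ (univ : Set X), (x, y) ∈ Y} = ∅ := by
        subst hne; simp
      rw [h2, measure_empty] at h1
      exact (by norm_num : ¬ ((1:ℝ≥0∞) ≤ 0)) h1
    obtain ⟨L, hpos, hfstL, hsndL, hsup⟩ := exists_functional hY hYne hall
    set π : Measure (X × X) := hallMeasure L hpos with hπdef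
    have hmargfst : ∀ U : Set X, IsOpen U → π (Prod.fst ⁻¹' U) = μ U := fun U hU =>
      hallMeasure_marginal L hpos ⟨Prod.fst, continuous_fst⟩ μ hfstL hU
    have hmargsnd : ∀ U : Set X, IsOpen U → π (Prod.snd ⁻¹' U) = ν U := fun U hU =>
      hallMeasure_marginal L hpos ⟨Prod.snd, continuous_snd⟩ ν hsndL hU
    have hπuniv : π univ = 1 := by
      have := hmargfst univ isOpen_univ
      simpa using this
    haveI hπprob : IsProbabilityMeasure π := ⟨hπuniv⟩
    have hgen : (‹MeasurableSpace X› : MeasurableSpace X)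
        = MeasurableSpace.generateFrom {s : Set X | IsOpen s} := BorelSpace.measurable_eq
    have hpi : IsPiSystem {s : Set X | IsOpen s} := fun s hs t ht _ => hs.inter ht
    have hmapfst : π.map Prod.fst = μ := by
      haveI : IsProbabilityMeasure (π.map Prod.fst) :=
        Measure.isProbabilityMeasure_map measurable_fst.aemeasurable
      refine ext_of_generate_finite _ hgen hpi (fun U hU => ?_) ?_
      · rw [Measure.map_apply measurable_fst hU.measurableSet, hmargfst U hU]
      · rw [measure_univ, measure_univ]
    have hmapsnd : π.map Prod.snd = ν := by
      haveI : IsProbabilityMeasure (π.map Prod.snd) :=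
        Measure.isProbabilityMeasure_map measurable_snd.aemeasurable
      refine ext_of_generate_finite _ hgen hpi (fun U hU => ?_) ?_
      · rw [Measure.map_apply measurable_snd hU.measurableSet, hmargsnd U hU]
      · rw [measure_univ, measure_univ]
    have hsupp : π Yᶜ = 0 := by
      have hle : π Yᶜ ≤ ENNReal.ofReal 0 := by
        refine hallMeasure_open_le L hpos hY.isOpen_compl ?_
        intro C hCcomp hCsub
        obtain ⟨u, hu1, hu0, -, hu01⟩ := exists_continuous_one_zero_of_isCompact hCcomp hY
          (Set.disjoint_left.mpr (fun z hzC hzY => hCsub hzC hzY))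
        have h1 : contVal L C ≤ L u :=
          contVal_le L hpos (fun z => (hu01 z).1) (fun z hz => (hu1 hz).ge)
        have h2 : L u ≤ sSup ((fun z => u z) '' Y) := hsup u
        have h3 : sSup ((fun z => u z) '' Y) ≤ 0 := by
          refine csSup_le (hYne.image _) ?_
          rintro r ⟨z, hz, rfl⟩
          simp [hu0 hz]
        linarith
      simpa using hle
    exact ⟨π, hπprob, hmapfst, hmapsnd, hsupp⟩
end

section
/- Let μ and ν be Borel probability measures on a compact metric space (X,d) and let Y ⊆ X × X be a closed subset. Suppose that ν(p₁₂^Y(S)) ≥ μ(S) for every closed subset S ⊆ X. Then for every pair of continuous real-valued functions f, g on X satisfying f(x) + g(x') ≥ 0 for all (x,x') ∈ Y, one has ∫_X f dμ + ∫_X g dν ≥ 0. -/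
open MeasureTheory

/-- If `ν (p₁₂^Y S) ≥ μ S` for every closed `S ⊆ X`, then for all continuous `f, g : X → ℝ`
with `f x + g x' ≥ 0` for all `(x,x') ∈ Y`, we have `∫ f dμ + ∫ g dν ≥ 0`. -/
theorem stmt_2 {X : Type*} [MetricSpace X] [CompactSpace X]
    [MeasurableSpace X] [BorelSpace X]
    (μ ν : Measure X) [IsProbabilityMeasure μ] [IsProbabilityMeasure ν]
    (Y : Set (X × X)) (hY : IsClosed Y)
    (hHall : ∀ S : Set X, IsClosed S → μ S ≤ ν {y | ∃ x ∈ S, (x, y) ∈ Y})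
    (f g : C(X, ℝ)) (hfg : ∀ p ∈ Y, 0 ≤ f p.1 + g p.2) :
    0 ≤ (∫ x, f x ∂μ) + ∫ x, g x ∂ν := by
  set M : ℝ := ‖f‖ + ‖g‖ with hM
  have hMf : ∀ x, |f x| ≤ M := fun x => le_trans (f.norm_coe_le_norm x)
    (le_add_of_nonneg_right (norm_nonneg g))
  have hMg : ∀ x, |g x| ≤ M := fun x => le_trans (g.norm_coe_le_norm x)
    (le_add_of_nonneg_left (norm_nonneg f))
  -- F = f + M ≥ 0, H = M - g ≥ 0
  set F : X → ℝ := fun x => f x + M with hF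
  set H : X → ℝ := fun x => M - g x with hH
  have hFnn : ∀ x, 0 ≤ F x := fun x => by
    have := abs_le.1 (hMf x); simp [hF]; linarith [this.1]
  have hHnn : ∀ x, 0 ≤ H x := fun x => by
    have := abs_le.1 (hMg x); simp [hH]; linarith [this.2]
  have hFc : Continuous F := f.continuous.add continuous_const
  have hHc : Continuous H := continuous_const.sub g.continuous
  -- key: for every t, ν {a | t < H a} ≤ μ {a | t < F a}
  have key : ∀ t : ℝ, ν {a | t < H a} ≤ μ {a | t < F a} := by
    intro t
    set S : Set X := {x | f x ≤ t - M} with hS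
    have hSclosed : IsClosed S := isClosed_le f.continuous continuous_const
    have hsub : {y | ∃ x ∈ S, (x, y) ∈ Y} ⊆ {y | ¬ (t < H y)} := by
      rintro y ⟨x, hx, hxy⟩
      have h1 : 0 ≤ f x + g y := hfg (x, y) hxy
      simp only [Set.mem_setOf_eq, not_lt, hH]
      have : f x ≤ t - M := hx
      linarith
    have h1 : μ S ≤ ν {y | ¬ (t < H y)} :=
      le_trans (hHall S hSclosed) (measure_mono hsub)
    have hScompl : {a | t < F a} = Sᶜ := by
      ext x
      simp only [Set.mem_setOf_eq, Set.mem_compl_iff, hF, hS, not_le]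
      constructor <;> intro h <;> linarith
    have hHcompl : {a | t < H a} = {y | ¬ (t < H y)}ᶜ := by
      ext x; simp
    rw [hScompl, hHcompl]
    have hSm : MeasurableSet S := hSclosed.measurableSet
    have hHm : MeasurableSet {y | ¬ (t < H y)} := by
      have : {y | ¬ (t < H y)} = {y | H y ≤ t} := by ext x; simp
      rw [this]; exact (isClosed_le hHc continuous_const).measurableSet
    rw [measure_compl hSm (measure_ne_top μ S),
      measure_compl hHm (measure_ne_top ν _)]
    simp only [measure_univ]
    exact tsub_le_tsub_left h1 1
  -- layer cake comparison
  have hFm : AEMeasurable F μ := hFc.aemeasurable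
  have hHm : AEMeasurable H ν := hHc.aemeasurable
  have lint_le : ∫⁻ x, ENNReal.ofReal (H x) ∂ν ≤ ∫⁻ x, ENNReal.ofReal (F x) ∂μ := by
    rw [lintegral_eq_lintegral_meas_lt ν (Filter.Eventually.of_forall hHnn) hHm,
      lintegral_eq_lintegral_meas_lt μ (Filter.Eventually.of_forall hFnn) hFm]
    exact lintegral_mono fun t => key t
  have hFfin : ∫⁻ x, ENNReal.ofReal (F x) ∂μ ≠ ⊤ := by
    have : ∫⁻ x, ENNReal.ofReal (F x) ∂μ ≤ ENNReal.ofReal (2 * M) * μ Set.univ := by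
      rw [← lintegral_const]
      apply lintegral_mono
      intro x
      apply ENNReal.ofReal_le_ofReal
      have := abs_le.1 (hMf x)
      simp only [hF]; linarith [this.2]
    exact ne_top_of_le_ne_top (ENNReal.mul_ne_top ENNReal.ofReal_ne_top (measure_ne_top μ _)) this
  have hFint : Integrable F μ := hFc.integrable_of_hasCompactSupport (HasCompactSupport.of_compactSpace F)
  have hHint : Integrable H ν := hHc.integrable_of_hasCompactSupport (HasCompactSupport.of_compactSpace H)
  have int_le : ∫ x, H x ∂ν ≤ ∫ x, F x ∂μ := by
    rw [integral_eq_lintegral_of_nonneg_ae (Filter.Eventually.of_forall hHnn)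
        hHint.aestronglyMeasurable,
      integral_eq_lintegral_of_nonneg_ae (Filter.Eventually.of_forall hFnn)
        hFint.aestronglyMeasurable]
    exact ENNReal.toReal_le_toReal (ne_top_of_le_ne_top hFfin lint_le) hFfin |>.mpr lint_le
  have hfi : Integrable (fun x => f x) μ := f.continuous.integrable_of_hasCompactSupport (HasCompactSupport.of_compactSpace _)
  have hgi : Integrable (fun x => g x) ν := g.continuous.integrable_of_hasCompactSupport (HasCompactSupport.of_compactSpace _)
  have e1 : ∫ x, F x ∂μ = (∫ x, f x ∂μ) + M := by
    simp only [hF]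
    rw [integral_add hfi (integrable_const M), integral_const]
    simp [measure_univ]
  have e2 : ∫ x, H x ∂ν = M - ∫ x, g x ∂ν := by
    simp only [hH]
    rw [integral_sub (integrable_const M) hgi, integral_const]
    simp [measure_univ]
  rw [e1, e2] at int_le
  linarith
end

section
/- Let (X,d) be a compact metric space, let μ and ν be Borel probability measures on X, and let r ≥ 0. The following are equivalent: (1) W_p(μ,ν) ≤ r for every real p ≥ 1; (2) there exists a (μ,ν)-coupling π supported on the closed set {(z,z') ∈ X × X | d(z,z') ≤ r}, i.e. π({(z,z') | d(z,z') > r}) = 0. -/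
open MeasureTheory

/-- The set of `(μ,ν)`-couplings: probability measures on `X × X` with marginals `μ` and `ν`. -/
def IsCoupling {X : Type*} [MeasurableSpace X]
    (π : Measure (X × X)) (μ ν : Measure X) : Prop :=
  IsProbabilityMeasure π ∧ π.map Prod.fst = μ ∧ π.map Prod.snd = ν

/-- The Wasserstein `p`-distance `W_p(μ,ν)`: the infimum over `(μ,ν)`-couplings `π` of
`(∫ d(x,y)^p dπ)^(1/p)`. -/
noncomputable def wassersteinDist {X : Type*} [MetricSpace X] [MeasurableSpace X]
    (p : ℝ) (μ ν : Measure X) : ℝ :=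
  sInf { r : ℝ | ∃ π : Measure (X × X), IsCoupling π μ ν ∧
      r = (∫ z, dist z.1 z.2 ^ p ∂π) ^ (1 / p) }

section Aux

open Filter Set Topology ENNReal

variable {X : Type*} [MetricSpace X] [CompactSpace X] [MeasurableSpace X] [BorelSpace X]

lemma isCoupling_prod (μ ν : Measure X) [IsProbabilityMeasure μ] [IsProbabilityMeasure ν] :
    IsCoupling (μ.prod ν) μ ν := by
  refine ⟨by infer_instance, ?_, ?_⟩
  · simpa [Measure.fst] using Measure.fst_prod (μ := μ) (ν := ν)
  · simpa [Measure.snd] using Measure.snd_prod (μ := μ) (ν := ν)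

lemma integrable_dist_rpow (p : ℝ) (hp : 0 ≤ p) (π : Measure (X × X)) [IsFiniteMeasure π] :
    Integrable (fun z : X × X => dist z.1 z.2 ^ p) π := by
  have hc : Continuous fun z : X × X => dist z.1 z.2 ^ p :=
    continuous_dist.rpow_const fun z => Or.inr hp
  exact hc.integrable_of_hasCompactSupport ((isClosed_tsupport _).isCompact)

/-- The key limit construction: from a sequence of couplings putting asymptotically
vanishing mass on `{r + δ < dist}` for every `δ > 0`, construct a coupling supported
on `{dist ≤ r}`, as an ultrafilter limit turned into a content. -/
lemma exists_coupling_limit (μ ν : Measure X) [IsProbabilityMeasure μ] [IsProbabilityMeasure ν]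
    (r : ℝ) (π_seq : ℕ → Measure (X × X))
    (hcoup : ∀ n, IsCoupling (π_seq n) μ ν)
    (hsmall : ∀ δ : ℝ, 0 < δ →
      Tendsto (fun n => π_seq n {z : X × X | r + δ < dist z.1 z.2}) atTop (𝓝 0)) :
    ∃ π : Measure (X × X), IsCoupling π μ ν ∧ π {z : X × X | r < dist z.1 z.2} = 0 := by
  classical
  haveI hprob : ∀ n, IsProbabilityMeasure (π_seq n) := fun n => (hcoup n).1
  set F : Ultrafilter ℕ := Filter.hyperfilter ℕ with hFdef
  have hFle : (F : Filter ℕ) ≤ atTop := Nat.cofinite_eq_atTop ▸ Filter.hyperfilter_le_cofinite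
  -- ultrafilter limits of the measures of each set
  have hex : ∀ U : Set (X × X), ∃ a : ℝ≥0∞, Tendsto (fun n => π_seq n U) (F : Filter ℕ) (𝓝 a) := by
    intro U
    obtain ⟨a, -, ha⟩ := (isCompact_univ (X := ℝ≥0∞)).ultrafilter_le_nhds
      (F.map fun n => π_seq n U) (by simp)
    exact ⟨a, by rwa [Ultrafilter.coe_map] at ha⟩
  choose α hα using hex
  have hmono : ∀ {U V : Set (X × X)}, U ⊆ V → α U ≤ α V := fun {U V} h =>
    le_of_tendsto_of_tendsto' (hα U) (hα V) fun n => measure_mono h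
  have huniv : α univ = 1 := by
    refine tendsto_nhds_unique (hα univ) ?_
    simpa [measure_univ] using (tendsto_const_nhds : Tendsto (fun _ : ℕ => (1 : ℝ≥0∞)) F (𝓝 1))
  have hone : ∀ U, α U ≤ 1 := fun U => huniv ▸ hmono (subset_univ U)
  have hadd : ∀ {U V : Set (X × X)}, MeasurableSet V → Disjoint U V →
      α (U ∪ V) = α U + α V := by
    intro U V hV hd
    refine tendsto_nhds_unique (hα (U ∪ V)) ?_
    have h := (hα U).add (hα V)
    refine h.congr fun n => ?_
    rw [measure_union hd hV]
  have hsubadd : ∀ U V : Set (X × X), α (U ∪ V) ≤ α U + α V := fun U V =>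
    le_of_tendsto_of_tendsto' (hα (U ∪ V)) ((hα U).add (hα V)) fun n => measure_union_le _ _
  have hfst : ∀ {A : Set X}, MeasurableSet A → α (Prod.fst ⁻¹' A) = μ A := by
    intro A hA
    refine tendsto_nhds_unique (hα _) ?_
    have h : ∀ n, π_seq n (Prod.fst ⁻¹' A) = μ A := fun n => by
      rw [← Measure.map_apply measurable_fst hA, (hcoup n).2.1]
    simpa [h] using (tendsto_const_nhds : Tendsto (fun _ : ℕ => μ A) F (𝓝 (μ A)))
  have hsnd : ∀ {A : Set X}, MeasurableSet A → α (Prod.snd ⁻¹' A) = ν A := by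
    intro A hA
    refine tendsto_nhds_unique (hα _) ?_
    have h : ∀ n, π_seq n (Prod.snd ⁻¹' A) = ν A := fun n => by
      rw [← Measure.map_apply measurable_snd hA, (hcoup n).2.2]
    simpa [h] using (tendsto_const_nhds : Tendsto (fun _ : ℕ => ν A) F (𝓝 (ν A)))
  have hE : ∀ δ : ℝ, 0 < δ → α {z : X × X | r + δ < dist z.1 z.2} = 0 := fun δ hδ =>
    tendsto_nhds_unique (hα _) ((hsmall δ hδ).mono_left hFle)
  -- the content
  let lam : TopologicalSpace.Compacts (X × X) → ℝ≥0∞ := fun K =>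
    ⨅ (U : {U : Set (X × X) // IsOpen U ∧ (K : Set (X × X)) ⊆ U}), α U
  have hNe : ∀ K : TopologicalSpace.Compacts (X × X),
      Nonempty {U : Set (X × X) // IsOpen U ∧ (K : Set (X × X)) ⊆ U} :=
    fun K => ⟨⟨univ, isOpen_univ, subset_univ _⟩⟩
  have lam_le : ∀ (K : TopologicalSpace.Compacts (X × X)) {U : Set (X × X)},
      IsOpen U → (K : Set (X × X)) ⊆ U → lam K ≤ α U :=
    fun K U hU hKU => iInf_le (fun U : {U : Set (X × X) // IsOpen U ∧ (K : Set (X × X)) ⊆ U} => α U) ⟨U, hU, hKU⟩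
  have le_lam : ∀ {b : ℝ≥0∞} (K : TopologicalSpace.Compacts (X × X)),
      (∀ U : Set (X × X), IsOpen U → (K : Set (X × X)) ⊆ U → b ≤ α U) → b ≤ lam K :=
    fun {b} K h => le_iInf fun U => h U U.2.1 U.2.2
  have lam_one : ∀ K, lam K ≤ 1 := fun K =>
    (lam_le K isOpen_univ (subset_univ _)).trans (hone _)
  have lam_ne_top : ∀ K, lam K ≠ ∞ := fun K => ((lam_one K).trans_lt ENNReal.one_lt_top).ne
  have lam_mono : ∀ (K₁ K₂ : TopologicalSpace.Compacts (X × X)),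
      (K₁ : Set (X × X)) ⊆ K₂ → lam K₁ ≤ lam K₂ := by
    intro K₁ K₂ h
    exact le_iInf fun U => lam_le K₁ U.2.1 (h.trans U.2.2)
  have lam_sup_le : ∀ K₁ K₂ : TopologicalSpace.Compacts (X × X),
      lam (K₁ ⊔ K₂) ≤ lam K₁ + lam K₂ := by
    intro K₁ K₂
    haveI := hNe K₁; haveI := hNe K₂
    have hrw : lam K₁ + lam K₂
        = ⨅ (U : {U : Set (X × X) // IsOpen U ∧ (K₁ : Set (X × X)) ⊆ U})
            (V : {V : Set (X × X) // IsOpen V ∧ (K₂ : Set (X × X)) ⊆ V}), (α U + α V) := by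
      rw [ENNReal.iInf_add]
      exact iInf_congr fun U => ENNReal.add_iInf
    rw [hrw]
    refine le_iInf fun U => le_iInf fun V => ?_
    refine (lam_le _ (U.2.1.union V.2.1) ?_).trans (hsubadd _ _)
    simpa [TopologicalSpace.Compacts.coe_sup] using union_subset_union U.2.2 V.2.2
  have lam_disj : ∀ K₁ K₂ : TopologicalSpace.Compacts (X × X),
      Disjoint (K₁ : Set (X × X)) (K₂ : Set (X × X)) →
      lam (K₁ ⊔ K₂) = lam K₁ + lam K₂ := by
    intro K₁ K₂ hd
    refine le_antisymm (lam_sup_le K₁ K₂) ?_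
    obtain ⟨W₁, W₂, hW₁, hW₂, hKW₁, hKW₂, hWd⟩ :=
      SeparatedNhds.of_isCompact_isCompact K₁.2 K₂.2 hd
    refine le_lam _ fun U hU hKU => ?_
    have hKU₁ : (K₁ : Set (X × X)) ⊆ U :=
      (subset_union_left.trans (le_of_eq (TopologicalSpace.Compacts.coe_sup K₁ K₂).symm)).trans hKU
    have hKU₂ : (K₂ : Set (X × X)) ⊆ U :=
      (subset_union_right.trans (le_of_eq (TopologicalSpace.Compacts.coe_sup K₁ K₂).symm)).trans hKU
    have h1 : lam K₁ ≤ α (U ∩ W₁) := lam_le _ (hU.inter hW₁) (subset_inter hKU₁ hKW₁)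
    have h2 : lam K₂ ≤ α (U ∩ W₂) := lam_le _ (hU.inter hW₂) (subset_inter hKU₂ hKW₂)
    calc lam K₁ + lam K₂ ≤ α (U ∩ W₁) + α (U ∩ W₂) := add_le_add h1 h2
      _ = α ((U ∩ W₁) ∪ (U ∩ W₂)) :=
        (hadd ((hU.inter hW₂).measurableSet)
          (hWd.mono inter_subset_right inter_subset_right)).symm
      _ ≤ α U := hmono (union_subset inter_subset_left inter_subset_left)
  let C : Content (X × X) :=
  { toFun := fun K => (lam K).toNNReal
    mono' := fun K₁ K₂ h =>
      ENNReal.toNNReal_mono (lam_ne_top K₂) (lam_mono K₁ K₂ h)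
    sup_disjoint' := fun K₁ K₂ hd _ _ => by
      have h := lam_disj K₁ K₂ hd
      have : (lam (K₁ ⊔ K₂)).toNNReal = (lam K₁ + lam K₂).toNNReal := by rw [h]
      rwa [ENNReal.toNNReal_add (lam_ne_top _) (lam_ne_top _)] at this
    sup_le' := fun K₁ K₂ => by
      have h := ENNReal.toNNReal_mono
        (by simp [lam_ne_top K₁, lam_ne_top K₂]) (lam_sup_le K₁ K₂)
      rwa [ENNReal.toNNReal_add (lam_ne_top _) (lam_ne_top _)] at h }
  have hC : ∀ K, (C K : ℝ≥0∞) = lam K := fun K => ENNReal.coe_toNNReal (lam_ne_top K)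
  set π : Measure (X × X) := C.measure with hπdef
  have hπ_open : ∀ {U : Set (X × X)}, IsOpen U →
      π U = ⨆ (K : TopologicalSpace.Compacts (X × X)) (_ : (K : Set (X × X)) ⊆ U), lam K := by
    intro U hU
    rw [hπdef, Content.measure_apply _ hU.measurableSet, C.outerMeasure_of_isOpen U hU]
    rw [show C.innerContent ⟨U, hU⟩
        = ⨆ (K : TopologicalSpace.Compacts (X × X)) (_ : (K : Set (X × X)) ⊆ U), (C K : ℝ≥0∞)
      from rfl]
    exact iSup_congr fun K => iSup_congr fun _ => hC K
  -- π is a probability measure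
  have hπuniv : π univ = 1 := by
    rw [hπ_open isOpen_univ]
    refine le_antisymm (iSup_le fun K => iSup_le fun _ => lam_one K) ?_
    have h1 : (1 : ℝ≥0∞) ≤ lam ⟨univ, isCompact_univ⟩ := by
      refine le_lam _ fun U hU hKU => ?_
      have : U = univ := eq_univ_of_univ_subset hKU
      rw [this, huniv]
    refine le_trans h1 ?_
    exact le_iSup_of_le ⟨univ, isCompact_univ⟩ (le_iSup_of_le (subset_univ _) le_rfl)
  haveI hπprob : IsProbabilityMeasure π := ⟨hπuniv⟩
  -- π vanishes on {r < dist}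
  have hπnull : π {z : X × X | r < dist z.1 z.2} = 0 := by
    have hGopen : IsOpen {z : X × X | r < dist z.1 z.2} :=
      isOpen_lt continuous_const (continuous_dist.comp (continuous_fst.prodMk continuous_snd))
    rw [hπ_open hGopen]
    refine le_antisymm (iSup_le fun K => iSup_le fun hKG => ?_) (zero_le)
    rcases eq_empty_or_nonempty (K : Set (X × X)) with hKe | hKne
    · have : lam K ≤ α {z : X × X | r + 1 < dist z.1 z.2} := by
        refine lam_le _ ?_ ?_
        · exact isOpen_lt continuous_const
            (continuous_dist.comp (continuous_fst.prodMk continuous_snd))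
        · rw [hKe]; exact empty_subset _
      rw [hE 1 one_pos] at this
      exact le_antisymm this (zero_le) |>.le
    · obtain ⟨z₀, hz₀K, hz₀min⟩ := K.2.exists_isMinOn hKne
        ((continuous_dist.comp (continuous_fst.prodMk continuous_snd)).continuousOn)
      have hz₀ : r < dist z₀.1 z₀.2 := hKG hz₀K
      set δ : ℝ := dist z₀.1 z₀.2 - r with hδdef
      have hδpos : 0 < δ := by simp [hδdef]; linarith
      have hKsub : (K : Set (X × X)) ⊆ {z : X × X | r + δ / 2 < dist z.1 z.2} := by
        intro z hz
        have := hz₀min hz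
        simp only [mem_setOf_eq]
        have : dist z₀.1 z₀.2 ≤ dist z.1 z.2 := hz₀min hz
        simp only [hδdef]; linarith
      have hlt : lam K ≤ α {z : X × X | r + δ / 2 < dist z.1 z.2} := by
        refine lam_le _ ?_ hKsub
        exact isOpen_lt continuous_const
          (continuous_dist.comp (continuous_fst.prodMk continuous_snd))
      rw [hE (δ / 2) (by linarith)] at hlt
      exact le_antisymm hlt (zero_le) |>.le
  -- marginals
  have hmargin : ∀ (σ : Measure X), IsProbabilityMeasure σ → σ.WeaklyRegular →
      ∀ (f : X × X → X), Measurable f → Continuous f →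
      (∀ {A : Set X}, MeasurableSet A → α (f ⁻¹' A) = σ A) →
      π.map f = σ := by
    intro σ hσprob hσreg f hfm hfc hαf
    haveI := hσprob
    haveI : IsProbabilityMeasure (π.map f) := Measure.isProbabilityMeasure_map hfm.aemeasurable
    refine ext_of_generate_finite {s : Set X | IsOpen s} ?_ ?_ ?_ ?_
    · rw [BorelSpace.measurable_eq (α := X)]; rfl
    · intro s hs t ht _
      exact hs.inter ht
    · intro A hA
      rw [Measure.map_apply hfm hA.measurableSet]
      rw [hπ_open (hA.preimage hfc)]
      refine le_antisymm (iSup_le fun K => iSup_le fun hKU => ?_) ?_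
      · have : lam K ≤ α (f ⁻¹' A) := lam_le _ (hA.preimage hfc) hKU
        rwa [hαf hA.measurableSet] at this
      · refine le_of_forall_lt fun c hc => ?_
        obtain ⟨K', hK'A, hK'closed, hcK'⟩ := hσreg.innerRegular hA c hc
        have hKcompact : IsCompact (f ⁻¹' K') := (hK'closed.preimage hfc).isCompact
        have hlamK : σ K' ≤ lam ⟨f ⁻¹' K', hKcompact⟩ := by
          refine le_lam _ fun U hU hKU => ?_
          rw [← hαf hK'closed.measurableSet]
          exact hmono hKU
        have : c < lam ⟨f ⁻¹' K', hKcompact⟩ := lt_of_lt_of_le hcK' hlamK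
        refine lt_of_lt_of_le this ?_
        exact le_iSup_of_le ⟨f ⁻¹' K', hKcompact⟩
          (le_iSup_of_le (preimage_mono hK'A) le_rfl)
    · simp [Measure.map_apply hfm MeasurableSet.univ, measure_univ]
  have hmap_fst : π.map Prod.fst = μ :=
    hmargin μ inferInstance inferInstance Prod.fst measurable_fst continuous_fst
      (fun {A} hA => hfst hA)
  have hmap_snd : π.map Prod.snd = ν :=
    hmargin ν inferInstance inferInstance Prod.snd measurable_snd continuous_snd
      (fun {A} hA => hsnd hA)
  exact ⟨π, ⟨hπprob, hmap_fst, hmap_snd⟩, hπnull⟩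

end Aux


section Aux2

open Filter Set Topology

variable {X : Type*} [MetricSpace X] [CompactSpace X] [MeasurableSpace X] [BorelSpace X]
variable (μ ν : Measure X) [IsProbabilityMeasure μ] [IsProbabilityMeasure ν]

lemma exists_coupling_small (r : ℝ) (hr : 0 ≤ r)
    (h : ∀ p : ℝ, 1 ≤ p → wassersteinDist p μ ν ≤ r) {δ t : ℝ} (hδ : 0 < δ) (ht : 0 < t) :
    ∃ π : Measure (X × X), IsCoupling π μ ν ∧
      π {z : X × X | r + δ < dist z.1 z.2} ≤ ENNReal.ofReal t := by
  set c : ℝ := (r + δ / 2) / (r + δ) with hcdef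
  have hc0 : 0 ≤ c := by positivity
  have hc1 : c < 1 := by
    rw [hcdef, div_lt_one (by positivity)]; linarith
  obtain ⟨k, hk⟩ := exists_pow_lt_of_lt_one ht hc1
  set p : ℝ := ((max k 1 : ℕ) : ℝ) with hpdef
  have hp1 : (1 : ℝ) ≤ p := by
    rw [hpdef]
    exact_mod_cast le_max_right k 1
  have hp0 : 0 < p := lt_of_lt_of_le one_pos hp1
  have hcp : c ^ p ≤ t := by
    rw [hpdef, Real.rpow_natCast]
    calc c ^ (max k 1) ≤ c ^ k := pow_le_pow_of_le_one hc0 hc1.le (le_max_left k 1)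
      _ ≤ t := hk.le
  have hSne : Set.Nonempty {s : ℝ | ∃ π : Measure (X × X), IsCoupling π μ ν ∧
      s = (∫ z, dist z.1 z.2 ^ p ∂π) ^ (1 / p)} :=
    ⟨_, μ.prod ν, isCoupling_prod μ ν, rfl⟩
  have hlt : sInf {s : ℝ | ∃ π : Measure (X × X), IsCoupling π μ ν ∧
      s = (∫ z, dist z.1 z.2 ^ p ∂π) ^ (1 / p)} < r + δ / 2 :=
    lt_of_le_of_lt (h p hp1) (by linarith)
  obtain ⟨s, ⟨π, hπ, hs⟩, hs_lt⟩ := exists_lt_of_csInf_lt hSne hlt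
  haveI : IsProbabilityMeasure π := hπ.1
  have hint : Integrable (fun z : X × X => dist z.1 z.2 ^ p) π :=
    integrable_dist_rpow p hp0.le π
  have hnn : 0 ≤ ∫ z, dist z.1 z.2 ^ p ∂π :=
    integral_nonneg fun z => Real.rpow_nonneg dist_nonneg _
  have hIlt : ∫ z, dist z.1 z.2 ^ p ∂π < (r + δ / 2) ^ p := by
    have hs0 : 0 ≤ s := hs ▸ Real.rpow_nonneg hnn _
    have h2 := Real.rpow_lt_rpow hs0 hs_lt hp0
    rwa [hs, ← Real.rpow_mul hnn, one_div_mul_cancel (ne_of_gt hp0), Real.rpow_one] at h2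
  have hma := mul_meas_ge_le_integral_of_nonneg
    (Filter.Eventually.of_forall fun z => Real.rpow_nonneg dist_nonneg p) hint ((r + δ) ^ p)
  have hsub : {z : X × X | r + δ < dist z.1 z.2}
      ⊆ {z : X × X | (r + δ) ^ p ≤ dist z.1 z.2 ^ p} :=
    fun z hz => Real.rpow_le_rpow (by positivity) (le_of_lt hz) hp0.le
  refine ⟨π, hπ, ?_⟩
  rw [ENNReal.le_ofReal_iff_toReal_le (measure_ne_top _ _) ht.le]
  have h1 : (π {z : X × X | r + δ < dist z.1 z.2}).toReal
      ≤ (π {z : X × X | (r + δ) ^ p ≤ dist z.1 z.2 ^ p}).toReal :=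
    ENNReal.toReal_mono (measure_ne_top _ _) (measure_mono hsub)
  have hd0 : (0 : ℝ) < (r + δ) ^ p := Real.rpow_pos_of_pos (by positivity) p
  have h2 : (π {z : X × X | (r + δ) ^ p ≤ dist z.1 z.2 ^ p}).toReal
      < (r + δ / 2) ^ p / (r + δ) ^ p := by
    rw [lt_div_iff₀ hd0]
    calc (π {z : X × X | (r + δ) ^ p ≤ dist z.1 z.2 ^ p}).toReal * (r + δ) ^ p
        = (r + δ) ^ p * (π {z : X × X | (r + δ) ^ p ≤ dist z.1 z.2 ^ p}).toReal := mul_comm _ _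
      _ ≤ ∫ z, dist z.1 z.2 ^ p ∂π := hma
      _ < (r + δ / 2) ^ p := hIlt
  have h3 : (r + δ / 2) ^ p / (r + δ) ^ p = c ^ p := by
    rw [hcdef, Real.div_rpow (by positivity) (by positivity)]
  linarith [h1, h2, h3 ▸ hcp]

lemma wasserstein_le_of_coupling (r : ℝ) (hr : 0 ≤ r) (π : Measure (X × X))
    (hπ : IsCoupling π μ ν) (hnull : π {z : X × X | r < dist z.1 z.2} = 0) :
    ∀ p : ℝ, 1 ≤ p → wassersteinDist p μ ν ≤ r := by
  intro p hp1
  have hp0 : 0 < p := lt_of_lt_of_le one_pos hp1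
  haveI : IsProbabilityMeasure π := hπ.1
  have hint : Integrable (fun z : X × X => dist z.1 z.2 ^ p) π :=
    integrable_dist_rpow p hp0.le π
  have hae0 : ∀ᵐ z ∂π, dist z.1 z.2 ≤ r := by
    rw [ae_iff]
    convert hnull using 2
    ext z
    simp [not_le]
  have hae : ∀ᵐ z ∂π, dist z.1 z.2 ^ p ≤ r ^ p := by
    filter_upwards [hae0] with z hz
    exact Real.rpow_le_rpow dist_nonneg hz hp0.le
  have hnn : 0 ≤ ∫ z, dist z.1 z.2 ^ p ∂π :=
    integral_nonneg fun z => Real.rpow_nonneg dist_nonneg _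
  have hI : ∫ z, dist z.1 z.2 ^ p ∂π ≤ r ^ p := by
    calc ∫ z, dist z.1 z.2 ^ p ∂π ≤ ∫ _z, r ^ p ∂π :=
          integral_mono_ae hint (integrable_const _) hae
      _ = r ^ p := by simp [measure_univ]
  have hW : wassersteinDist p μ ν ≤ (∫ z, dist z.1 z.2 ^ p ∂π) ^ (1 / p) := by
    refine csInf_le ⟨0, fun s hs => ?_⟩ ⟨π, hπ, rfl⟩
    obtain ⟨π', -, hs⟩ := hs
    exact hs ▸ Real.rpow_nonneg (integral_nonneg fun z => Real.rpow_nonneg dist_nonneg _) _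
  calc wassersteinDist p μ ν ≤ (∫ z, dist z.1 z.2 ^ p ∂π) ^ (1 / p) := hW
    _ ≤ (r ^ p) ^ (1 / p) := Real.rpow_le_rpow hnn hI (by positivity)
    _ = r := by
      rw [← Real.rpow_mul hr, mul_one_div_cancel (ne_of_gt hp0), Real.rpow_one]

end Aux2

/-- `W_p(μ,ν) ≤ r` for all `p ≥ 1` iff there is a `(μ,ν)`-coupling supported on the set
of pairs of points at distance at most `r` apart. -/
theorem stmt_5 {X : Type*} [MetricSpace X] [CompactSpace X]
    [MeasurableSpace X] [BorelSpace X]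
    (μ ν : Measure X) [IsProbabilityMeasure μ] [IsProbabilityMeasure ν]
    (r : ℝ) (hr : 0 ≤ r) :
    (∀ p : ℝ, 1 ≤ p → wassersteinDist p μ ν ≤ r) ↔
      ∃ π : Measure (X × X), IsCoupling π μ ν ∧
        π {z : X × X | r < dist z.1 z.2} = 0 := by
  constructor
  · intro h
    have hkey : ∀ n : ℕ, ∃ π : Measure (X × X), IsCoupling π μ ν ∧
        π {z : X × X | r + 1 / ((n : ℝ) + 1) < dist z.1 z.2}
          ≤ ENNReal.ofReal (1 / ((n : ℝ) + 1)) := fun n =>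
      exists_coupling_small μ ν r hr h (by positivity) (by positivity)
    choose π_seq hcoup hbound using hkey
    refine exists_coupling_limit μ ν r π_seq hcoup ?_
    intro δ hδ
    have hup : Filter.Tendsto (fun n : ℕ => ENNReal.ofReal (1 / ((n : ℝ) + 1)))
        Filter.atTop (nhds 0) := by
      rw [show (0 : ENNReal) = ENNReal.ofReal 0 by simp]
      exact ENNReal.tendsto_ofReal tendsto_one_div_add_atTop_nhds_zero_nat
    refine tendsto_of_tendsto_of_tendsto_of_le_of_le' tendsto_const_nhds hup ?_ ?_
    · exact Filter.Eventually.of_forall fun n => zero_le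
    · rw [Filter.eventually_atTop]
      refine ⟨⌈1 / δ⌉₊, fun n hn => ?_⟩
      have h1 : 1 / ((n : ℝ) + 1) ≤ δ := by
        rw [div_le_iff₀ (by positivity)]
        have h2 : 1 / δ ≤ (n : ℝ) + 1 := by
          calc 1 / δ ≤ (⌈1 / δ⌉₊ : ℝ) := Nat.le_ceil _
            _ ≤ (n : ℝ) := by exact_mod_cast hn
            _ ≤ (n : ℝ) + 1 := by linarith
        calc (1 : ℝ) = δ * (1 / δ) := by field_simp
          _ ≤ δ * ((n : ℝ) + 1) := by
            exact mul_le_mul_of_nonneg_left h2 hδ.le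
      refine le_trans (measure_mono ?_) (hbound n)
      intro z hz
      simp only [Set.mem_setOf_eq] at hz ⊢
      linarith
  · rintro ⟨π, hπ, hnull⟩
    exact wasserstein_le_of_coupling μ ν r hr π hπ hnull
end

section
/- Let X be a finite set, let Y ⊆ X × X be a subset, and let μ and ν be probability measures on X. Then there exists a (μ,ν)-coupling π supported on Y (i.e. π((X × X) \ Y) = 0) if and only if ν(p₁₂^Y(S)) ≥ μ(S) for every subset S ⊆ X. -/
open MeasureTheory

open Finset

theorem nat_hall {X : Type*} [Fintype X] [DecidableEq X] (R : X → X → Prop)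
    [∀ x y, Decidable (R x y)] (A B : X → ℕ)
    (h : ∀ S : Finset X, ∑ x ∈ S, A x ≤ ∑ y ∈ univ.filter (fun y => ∃ x ∈ S, R x y), B y) :
    ∃ m : X → X → ℕ, (∀ x y, m x y ≠ 0 → R x y) ∧ (∀ x, ∑ y, m x y = A x) ∧
      (∀ y, ∑ x, m x y ≤ B y) := by
  classical
  have hall : ∀ s : Finset (Σ x : X, Fin (A x)),
      s.card ≤ (s.biUnion (fun p => (univ : Finset (Σ y : X, Fin (B y))).filter
        (fun q => R p.1 q.1))).card := by
    intro s
    have h1 : s.card ≤ ∑ x ∈ s.image Sigma.fst, A x := by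
      calc s.card ≤ (((s.image Sigma.fst)).sigma (fun x => (univ : Finset (Fin (A x))))).card := by
            apply card_le_card
            intro p hp
            rw [Finset.mem_sigma]
            exact ⟨Finset.mem_image_of_mem _ hp, mem_univ _⟩
        _ = ∑ x ∈ s.image Sigma.fst, A x := by simp [card_sigma]
    have h2 : s.biUnion (fun p => (univ : Finset (Σ y : X, Fin (B y))).filter
        (fun q => R p.1 q.1)) = (univ.filter (fun y => ∃ x ∈ s.image Sigma.fst, R x y)).sigma
        (fun y => (univ : Finset (Fin (B y)))) := by
      ext q
      rw [Finset.mem_sigma, Finset.mem_biUnion]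
      simp only [mem_filter, mem_univ, true_and, and_true, mem_image]
      constructor
      · rintro ⟨p, hp, hR⟩; exact ⟨p.1, ⟨p, hp, rfl⟩, hR⟩
      · rintro ⟨x, ⟨p, hp, rfl⟩, hR⟩; exact ⟨p, hp, hR⟩
    rw [h2]
    rw [card_sigma]
    simp only [card_univ, Fintype.card_fin]
    exact h1.trans (h _)
  obtain ⟨f, hfinj, hft⟩ := (Finset.all_card_le_biUnion_card_iff_exists_injective _).mp hall
  refine ⟨fun x y => (univ.filter (fun i : Fin (A x) => (f ⟨x, i⟩).1 = y)).card, ?_, ?_, ?_⟩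
  · intro x y hne
    obtain ⟨i, hi⟩ := Finset.card_pos.mp (Nat.pos_of_ne_zero hne)
    simp only [mem_filter] at hi
    have := hft ⟨x, i⟩
    simp only [mem_filter] at this
    rw [← hi.2]
    exact this.2
  · intro x
    rw [← Finset.card_eq_sum_card_fiberwise (f := fun i : Fin (A x) => (f ⟨x, i⟩).1)
      (t := univ) (fun _ _ => mem_univ _)]
    simp
  · intro y
    have lhs : ∑ x, (univ.filter (fun i : Fin (A x) => (f ⟨x, i⟩).1 = y)).card
        = ((univ : Finset (Σ x : X, Fin (A x))).filter (fun p => (f p).1 = y)).card := by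
      simp only [Finset.card_filter]
      rw [Finset.sum_sigma']
      rw [Finset.univ_sigma_univ]
    have rhs : ((univ : Finset (Σ y : X, Fin (B y))).filter (fun q => q.1 = y)).card = B y := by
      simp only [Finset.card_filter]
      rw [← Finset.univ_sigma_univ, Finset.sum_sigma]
      rw [Finset.sum_eq_single y]
      · simp
      · intro b _ hb; simp [hb]
      · intro hy; exact absurd (mem_univ y) hy
    rw [lhs, ← rhs]
    apply Finset.card_le_card_of_injOn f
    · intro p hp
      simp only [Finset.mem_coe, mem_filter, mem_univ, true_and] at hp ⊢
      exact hp
    · exact hfinj.injOn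

theorem real_hall_approx {X : Type*} [Fintype X] [DecidableEq X] (R : X → X → Prop)
    [∀ x y, Decidable (R x y)] (f g : X → ℝ) (hf : ∀ x, 0 ≤ f x) (hg : ∀ y, 0 ≤ g y)
    (hsum : ∑ x, f x = 1)
    (hall : ∀ S : Finset X, ∑ x ∈ S, f x ≤ ∑ y ∈ univ.filter (fun y => ∃ x ∈ S, R x y), g y)
    {ε : ℝ} (hε : 0 < ε) :
    ∃ w : X → X → ℝ, (∀ x y, 0 ≤ w x y) ∧ (∀ x y, w x y ≠ 0 → R x y) ∧
      (∀ x, ∑ y, w x y ≤ f x) ∧ (∀ y, ∑ x, w x y ≤ g y) ∧ 1 - ε ≤ ∑ x, ∑ y, w x y := by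
  classical
  set δ : ℝ := min (ε / 2) (1 / 2) with hδdef
  have hδpos : 0 < δ := lt_min (by linarith) (by norm_num)
  have hδle : δ ≤ 1 / 2 := min_le_right _ _
  have hδε : 2 * δ ≤ ε := by
    have := min_le_left (ε / 2) (1 / 2); linarith [this]
  -- the minimum positive value of g-sums
  set P : Finset (Finset X) := univ.filter (fun T => 0 < ∑ y ∈ T, g y) with hP
  have hPne : P.Nonempty := by
    refine ⟨univ, ?_⟩
    rw [hP, mem_filter]
    refine ⟨mem_univ _, ?_⟩
    have h1 := hall (univ : Finset X)
    exact lt_of_lt_of_le one_pos (le_trans (le_of_eq hsum.symm) (h1.trans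
      (Finset.sum_le_sum_of_subset_of_nonneg (Finset.filter_subset _ _) fun y _ _ => hg y)))
  set c : ℝ := (P.image (fun T => ∑ y ∈ T, g y)).min' (hPne.image _) with hc
  have hcpos : 0 < c := by
    have := Finset.min'_mem (P.image (fun T => ∑ y ∈ T, g y)) (hPne.image _)
    rw [← hc] at this
    obtain ⟨T, hT, hTc⟩ := Finset.mem_image.mp this
    rw [hP, mem_filter] at hT
    rw [← hTc]; exact hT.2
  have hcle : ∀ T : Finset X, 0 < ∑ y ∈ T, g y → c ≤ ∑ y ∈ T, g y := by
    intro T hT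
    apply Finset.min'_le
    exact Finset.mem_image_of_mem _ (by rw [hP, mem_filter]; exact ⟨mem_univ _, hT⟩)
  -- choose n
  obtain ⟨n, hn⟩ := exists_nat_gt (max ((Fintype.card X : ℝ) / (δ * c)) ((Fintype.card X : ℝ) / δ))
  have hnpos : 0 < (n : ℝ) := by
    have h0 : (0:ℝ) ≤ max ((Fintype.card X : ℝ) / (δ * c)) ((Fintype.card X : ℝ) / δ) :=
      le_max_of_le_right (div_nonneg (Nat.cast_nonneg _) hδpos.le)
    linarith [lt_of_le_of_lt h0 hn]
  have hn1 : (Fintype.card X : ℝ) ≤ (n : ℝ) * (δ * c) := by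
    have := (div_le_iff₀ (by positivity)).mp (le_of_lt (lt_of_le_of_lt (le_max_left _ _) hn))
    linarith
  have hn2 : (Fintype.card X : ℝ) ≤ (n : ℝ) * δ := by
    have := (div_le_iff₀ hδpos).mp (le_of_lt (lt_of_le_of_lt (le_max_right _ _) hn))
    linarith
  set A : X → ℕ := fun x => ⌊(n : ℝ) * ((1 - δ) * f x)⌋₊ with hA
  set B : X → ℕ := fun y => ⌊(n : ℝ) * g y⌋₊ with hB
  have hAle : ∀ x, (A x : ℝ) ≤ (n : ℝ) * ((1 - δ) * f x) := by
    intro x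
    apply Nat.floor_le
    exact mul_nonneg hnpos.le (mul_nonneg (by linarith) (hf x))
  have hBle : ∀ y, (B y : ℝ) ≤ (n : ℝ) * g y :=
    fun y => Nat.floor_le (mul_nonneg hnpos.le (hg y))
  have hAgt : ∀ x, (n : ℝ) * ((1 - δ) * f x) - 1 < A x := fun x => Nat.sub_one_lt_floor _
  have hBgt : ∀ y, (n : ℝ) * g y - 1 < B y := fun y => Nat.sub_one_lt_floor _
  have hABhall : ∀ S : Finset X,
      ∑ x ∈ S, A x ≤ ∑ y ∈ univ.filter (fun y => ∃ x ∈ S, R x y), B y := by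
    intro S
    set NS := univ.filter (fun y => ∃ x ∈ S, R x y) with hNS
    by_cases hv : 0 < ∑ y ∈ NS, g y
    · rw [← Nat.cast_le (α := ℝ)]
      push_cast
      have l1 : (∑ x ∈ S, (A x : ℝ)) ≤ (n : ℝ) * ((1 - δ) * ∑ x ∈ S, f x) := by
        refine (Finset.sum_le_sum fun x (_ : x ∈ S) => hAle x).trans_eq ?_
        simp only [Finset.mul_sum]
      have l2 : (n : ℝ) * (∑ y ∈ NS, g y) - (Fintype.card X : ℝ) ≤ ∑ y ∈ NS, (B y : ℝ) := by
        have : ∀ y ∈ NS, (n : ℝ) * g y - 1 ≤ (B y : ℝ) := fun y _ => (hBgt y).le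
        calc (n : ℝ) * (∑ y ∈ NS, g y) - (Fintype.card X : ℝ)
            ≤ ∑ y ∈ NS, ((n : ℝ) * g y - 1) := by
              rw [Finset.sum_sub_distrib, Finset.mul_sum]
              simp only [Finset.sum_const, nsmul_eq_mul, mul_one]
              have : (NS.card : ℝ) ≤ (Fintype.card X : ℝ) := by
                exact_mod_cast Nat.cast_le.mpr (Finset.card_le_univ NS)
              linarith
          _ ≤ ∑ y ∈ NS, (B y : ℝ) := Finset.sum_le_sum this
      have l3 : ∑ x ∈ S, f x ≤ ∑ y ∈ NS, g y := hall S
      have l4 : c ≤ ∑ y ∈ NS, g y := hcle _ hv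
      have l5 : (n : ℝ) * ((1 - δ) * ∑ x ∈ S, f x) ≤
          (n : ℝ) * (∑ y ∈ NS, g y) - (Fintype.card X : ℝ) := by
        have hfS : 0 ≤ ∑ x ∈ S, f x := Finset.sum_nonneg fun x _ => hf x
        have e1 : (n : ℝ) * ((1 - δ) * ∑ x ∈ S, f x) ≤ (n : ℝ) * ((1 - δ) * ∑ y ∈ NS, g y) := by
          apply mul_le_mul_of_nonneg_left _ hnpos.le
          apply mul_le_mul_of_nonneg_left l3 (by linarith)
        have e2 : (Fintype.card X : ℝ) ≤ (n : ℝ) * δ * (∑ y ∈ NS, g y) := by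
          calc (Fintype.card X : ℝ) ≤ (n : ℝ) * (δ * c) := hn1
            _ ≤ (n : ℝ) * δ * (∑ y ∈ NS, g y) := by
                rw [← mul_assoc]
                exact mul_le_mul_of_nonneg_left l4 (by positivity)
        nlinarith
      linarith
    · have hz : ∀ x ∈ S, f x = 0 := by
        have h0 : ∑ x ∈ S, f x ≤ 0 := (hall S).trans (le_of_not_gt hv)
        have h1 : ∑ x ∈ S, f x = 0 := le_antisymm h0 (Finset.sum_nonneg fun x _ => hf x)
        exact fun x hx => ((Finset.sum_eq_zero_iff_of_nonneg (fun x _ => hf x)).mp h1) x hx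
      have : ∑ x ∈ S, A x = 0 := by
        apply Finset.sum_eq_zero
        intro x hx
        rw [hA]
        simp [hz x hx]
      omega
  obtain ⟨m, hmR, hmrow, hmcol⟩ := nat_hall R A B hABhall
  refine ⟨fun x y => (m x y : ℝ) / n, fun x y => by positivity, ?_, ?_, ?_, ?_⟩
  · intro x y hne
    refine hmR x y fun h0 => hne ?_
    simp [h0]
  · intro x
    rw [← Finset.sum_div]
    rw [div_le_iff₀ hnpos]
    calc ∑ y, (m x y : ℝ) = (A x : ℝ) := by
            exact_mod_cast congrArg (Nat.cast : ℕ → ℝ) (hmrow x)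
      _ ≤ (n : ℝ) * ((1 - δ) * f x) := hAle x
      _ ≤ f x * n := by nlinarith [hf x]
  · intro y
    rw [← Finset.sum_div, div_le_iff₀ hnpos]
    calc ∑ x, (m x y : ℝ) ≤ (B y : ℝ) := by exact_mod_cast hmcol y
      _ ≤ (n : ℝ) * g y := hBle y
      _ = g y * n := by ring
  · have h1 : ∀ x, (1 - δ) * f x - 1 / n ≤ ∑ y, (m x y : ℝ) / n := by
      intro x
      have e : (∑ y, (m x y : ℝ)) = (A x : ℝ) := by
        exact_mod_cast congrArg (Nat.cast : ℕ → ℝ) (hmrow x)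
      rw [← Finset.sum_div, e, le_div_iff₀ hnpos]
      have hinv : (1 / (n : ℝ)) * n = 1 := one_div_mul_cancel (ne_of_gt hnpos)
      nlinarith [hAgt x]
    have hcard : (Fintype.card X : ℝ) / n ≤ δ := (div_le_iff₀ hnpos).mpr (by linarith [hn2])
    calc (1 : ℝ) - ε ≤ 1 - 2 * δ := by linarith
      _ ≤ ∑ x, ((1 - δ) * f x - 1 / n) := by
          rw [Finset.sum_sub_distrib, ← Finset.mul_sum, hsum]
          simp only [Finset.sum_const, nsmul_eq_mul, card_univ, mul_one_div]
          linarith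
      _ ≤ ∑ x, ∑ y, (m x y : ℝ) / n := Finset.sum_le_sum fun x _ => h1 x

set_option maxHeartbeats 2000000 in
theorem real_hall {X : Type*} [Fintype X] [DecidableEq X] (R : X → X → Prop)
    [∀ x y, Decidable (R x y)] (f g : X → ℝ) (hf : ∀ x, 0 ≤ f x) (hg : ∀ y, 0 ≤ g y)
    (hfsum : ∑ x, f x = 1) (hgsum : ∑ y, g y = 1)
    (hall : ∀ S : Finset X, ∑ x ∈ S, f x ≤ ∑ y ∈ univ.filter (fun y => ∃ x ∈ S, R x y), g y) :
    ∃ w : X → X → ℝ, (∀ x y, 0 ≤ w x y) ∧ (∀ x y, w x y ≠ 0 → R x y) ∧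
      (∀ x, ∑ y, w x y = f x) ∧ (∀ y, ∑ x, w x y = g y) := by
  classical
  set K : Set ((X × X) → ℝ) := {w | (∀ p, 0 ≤ w p) ∧ (∀ p : X × X, ¬ R p.1 p.2 → w p = 0) ∧
    (∀ x, ∑ y, w (x, y) ≤ f x) ∧ (∀ y, ∑ x, w (x, y) ≤ g y)} with hKdef
  have hfle1 : ∀ x, f x ≤ 1 := by
    intro x
    rw [← hfsum]
    exact Finset.single_le_sum (fun i _ => hf i) (mem_univ x)
  have hclosed : IsClosed K := by
    rw [hKdef]
    simp only [Set.setOf_and]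
    apply IsClosed.inter
    · rw [Set.setOf_forall]
      exact isClosed_iInter fun p => isClosed_le continuous_const (continuous_apply p)
    apply IsClosed.inter
    · rw [Set.setOf_forall]
      refine isClosed_iInter fun p => ?_
      by_cases h : R p.1 p.2
      · simp only [h, not_true_eq_false, false_implies, Set.setOf_true]
        exact isClosed_univ
      · simp only [h, not_false_eq_true, true_implies]
        exact isClosed_eq (continuous_apply p) continuous_const
    apply IsClosed.inter
    · rw [Set.setOf_forall]
      exact isClosed_iInter fun x => isClosed_le
        (continuous_finset_sum _ fun y _ => continuous_apply (x, y)) continuous_const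
    · rw [Set.setOf_forall]
      exact isClosed_iInter fun y => isClosed_le
        (continuous_finset_sum _ fun x _ => continuous_apply (x, y)) continuous_const
  have hsub : K ⊆ Set.univ.pi (fun _ : X × X => Set.Icc (0:ℝ) 1) := by
    intro w hw
    obtain ⟨h0, _, hrow, _⟩ := hw
    intro p _
    refine ⟨h0 p, ?_⟩
    calc w p ≤ ∑ y, w (p.1, y) :=
          Finset.single_le_sum (fun y (_ : y ∈ univ) => h0 (p.1, y)) (mem_univ p.2)
      _ ≤ f p.1 := hrow p.1
      _ ≤ 1 := hfle1 p.1
  have hcomp : IsCompact K :=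
    IsCompact.of_isClosed_subset (isCompact_univ_pi fun _ => isCompact_Icc) hclosed hsub
  have hne : K.Nonempty := by
    refine ⟨0, fun p => le_refl 0, fun p _ => rfl, ?_, ?_⟩
    · intro x; simpa using hf x
    · intro y; simpa using hg y
  have hmasscont : Continuous (fun w : (X × X) → ℝ => ∑ p, w p) :=
    continuous_finset_sum _ fun p _ => continuous_apply p
  obtain ⟨w, hwK, hwmax⟩ := hcomp.exists_isMaxOn hne hmasscont.continuousOn
  obtain ⟨hw0, hwR, hwrow, hwcol⟩ := hwK
  -- mass is at least 1
  have hmass_ge : ∀ ε : ℝ, 0 < ε → 1 - ε ≤ ∑ p, w p := by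
    intro ε hε
    obtain ⟨w', h0', hR', hrow', hcol', hm'⟩ := real_hall_approx R f g hf hg hfsum hall hε
    have hw'K : (fun p : X × X => w' p.1 p.2) ∈ K := by
      refine ⟨fun p => h0' p.1 p.2, fun p hp => ?_, fun x => hrow' x, fun y => hcol' y⟩
      by_contra hne0
      exact hp (hR' p.1 p.2 hne0)
    have := hwmax hw'K
    simp only [Set.mem_setOf_eq] at this
    calc 1 - ε ≤ ∑ x, ∑ y, w' x y := hm'
      _ = ∑ p : X × X, w' p.1 p.2 := (Fintype.sum_prod_type (fun p : X × X => w' p.1 p.2)).symm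
      _ ≤ ∑ p, w p := this
  have hmass_le : ∑ p, w p ≤ 1 := by
    calc ∑ p : X × X, w p = ∑ x, ∑ y, w (x, y) := Fintype.sum_prod_type w
      _ ≤ ∑ x, f x := Finset.sum_le_sum fun x _ => hwrow x
      _ = 1 := hfsum
  have hmass : ∑ p, w p = 1 := by
    by_contra hne1
    have hlt : ∑ p, w p < 1 := lt_of_le_of_ne hmass_le hne1
    have := hmass_ge ((1 - ∑ p, w p) / 2) (by linarith)
    linarith
  have hrows : ∀ x, ∑ y, w (x, y) = f x := by
    have hle : ∀ x ∈ univ, ∑ y, w (x, y) ≤ f x := fun x _ => hwrow x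
    have heq : ∑ x, ∑ y, w (x, y) = ∑ x, f x := by
      rw [hfsum, ← hmass]
      exact (Fintype.sum_prod_type w).symm
    intro x
    exact ((Finset.sum_eq_sum_iff_of_le hle).mp heq) x (mem_univ x)
  have hcols : ∀ y, ∑ x, w (x, y) = g y := by
    have hle : ∀ y ∈ univ, ∑ x, w (x, y) ≤ g y := fun y _ => hwcol y
    have heq : ∑ y, ∑ x, w (x, y) = ∑ y, g y := by
      rw [hgsum, ← hmass]
      exact (Fintype.sum_prod_type_right w).symm
    intro y
    exact ((Finset.sum_eq_sum_iff_of_le hle).mp heq) y (mem_univ y)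
  refine ⟨fun x y => w (x, y), fun x y => hw0 (x, y), fun x y hne0 => ?_, hrows, hcols⟩
  by_contra hR
  exact hne0 (hwR (x, y) hR)

theorem meas_eq_sum {Z : Type*} [Fintype Z] [DecidableEq Z] [MeasurableSpace Z]
    [MeasurableSingletonClass Z] (ρ : Measure Z) (s : Set Z) [DecidablePred (· ∈ s)] :
    ρ s = ∑ z ∈ univ.filter (· ∈ s), ρ {z} := by
  have hs : s = ⋃ z ∈ (univ.filter (· ∈ s) : Finset Z), {z} := by
    ext z; simp
  conv_lhs => rw [hs]
  rw [measure_biUnion_finset]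
  · intro a _ b _ hab
    simp [Set.disjoint_singleton, hab]
  · exact fun b _ => measurableSet_singleton b

theorem meas_finset_sum {Z : Type*} [Fintype Z] [DecidableEq Z] [MeasurableSpace Z]
    [MeasurableSingletonClass Z] (ρ : Measure Z) (F : Finset Z) :
    ρ ↑F = ∑ z ∈ F, ρ {z} := by
  classical
  rw [meas_eq_sum ρ ↑F]
  congr 1
  ext z
  simp

/-- **Hall's theorem for measures on a finite set.** For a finite set `X`, a subset
`Y ⊆ X × X` and probability measures `μ, ν` on `X`, there is a `(μ,ν)`-coupling supported
on `Y` if and only if `ν (p₁₂^Y S) ≥ μ S` for every subset `S ⊆ X`. -/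
theorem stmt_9 {X : Type*} [Fintype X]
    [MeasurableSpace X] [MeasurableSingletonClass X]
    (Y : Set (X × X))
    (μ ν : Measure X) [IsProbabilityMeasure μ] [IsProbabilityMeasure ν] :
    (∃ π : Measure (X × X), IsProbabilityMeasure π ∧
        π.map Prod.fst = μ ∧ π.map Prod.snd = ν ∧ π Yᶜ = 0) ↔
      ∀ S : Set X, μ S ≤ ν {y | ∃ x ∈ S, (x, y) ∈ Y} := by
  classical
  have hmX : ∀ s : Set X, MeasurableSet s := fun s => s.toFinite.measurableSet
  have hmXX : ∀ s : Set (X × X), MeasurableSet s := fun s => s.toFinite.measurableSet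
  constructor
  · rintro ⟨π, hπ, hfst, hsnd, hY0⟩ S
    have h1 : μ S = π (Prod.fst ⁻¹' S) := by
      rw [← hfst, Measure.map_apply measurable_fst (hmX S)]
    have h2 : π (Prod.fst ⁻¹' S) ≤ π (Prod.fst ⁻¹' S ∩ Y) + π Yᶜ := by
      refine le_trans (measure_mono ?_) (measure_union_le _ _)
      intro p hp
      by_cases hpY : p ∈ Y
      · exact Or.inl ⟨hp, hpY⟩
      · exact Or.inr hpY
    have h3 : π (Prod.fst ⁻¹' S ∩ Y) ≤ π (Prod.snd ⁻¹' {y | ∃ x ∈ S, (x, y) ∈ Y}) := by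
      apply measure_mono
      rintro ⟨x, y⟩ ⟨hx, hxy⟩
      exact ⟨x, hx, hxy⟩
    have h4 : π (Prod.snd ⁻¹' {y | ∃ x ∈ S, (x, y) ∈ Y}) = ν {y | ∃ x ∈ S, (x, y) ∈ Y} := by
      rw [← hsnd, Measure.map_apply measurable_snd (hmX _)]
    rw [h1, ← h4]
    calc π (Prod.fst ⁻¹' S) ≤ π (Prod.fst ⁻¹' S ∩ Y) + π Yᶜ := h2
      _ = π (Prod.fst ⁻¹' S ∩ Y) := by rw [hY0, add_zero]
      _ ≤ _ := h3
  · intro hall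
    set R : X → X → Prop := fun x y => (x, y) ∈ Y with hR
    set f : X → ℝ := fun x => (μ {x}).toReal with hf
    set g : X → ℝ := fun y => (ν {y}).toReal with hg
    have hμt : ∀ s : Set X, μ s ≠ ⊤ := fun s => measure_ne_top μ s
    have hfsum : ∑ x, f x = 1 := by
      have h1 : μ Set.univ = ∑ x, μ {x} := by
        rw [meas_eq_sum μ Set.univ]
        simp
      have h2 : (μ Set.univ).toReal = 1 := by simp
      rw [h1] at h2
      rw [← h2, ENNReal.toReal_sum (fun a _ => measure_ne_top μ _)]
    have hgsum : ∑ y, g y = 1 := by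
      have h1 : ν Set.univ = ∑ y, ν {y} := by
        rw [meas_eq_sum ν Set.univ]
        simp
      have h2 : (ν Set.univ).toReal = 1 := by simp
      rw [h1] at h2
      rw [← h2, ENNReal.toReal_sum (fun a _ => measure_ne_top ν _)]
    have hhall : ∀ S : Finset X,
        ∑ x ∈ S, f x ≤ ∑ y ∈ univ.filter (fun y => ∃ x ∈ S, R x y), g y := by
      intro S
      have h1 : μ ↑S = ∑ x ∈ S, μ {x} := meas_finset_sum μ S
      have h2 : ν {y | ∃ x ∈ (↑S : Set X), (x, y) ∈ Y}
          = ∑ y ∈ univ.filter (fun y => ∃ x ∈ S, R x y), ν {y} := by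
        have hset : {y | ∃ x ∈ (↑S : Set X), (x, y) ∈ Y}
            = ↑(univ.filter (fun y => ∃ x ∈ S, R x y)) := by
          ext z
          simp [hR]
        rw [hset]
        exact meas_finset_sum ν _
      have h3 := hall ↑S
      rw [h1, h2] at h3
      calc ∑ x ∈ S, f x = (∑ x ∈ S, μ {x}).toReal :=
            (ENNReal.toReal_sum (fun a _ => measure_ne_top μ _)).symm
        _ ≤ (∑ y ∈ univ.filter (fun y => ∃ x ∈ S, R x y), ν {y}).toReal := by
            apply ENNReal.toReal_mono _ h3
            exact (ENNReal.sum_ne_top).mpr (fun a _ => measure_ne_top ν _)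
        _ = ∑ y ∈ univ.filter (fun y => ∃ x ∈ S, R x y), g y :=
            ENNReal.toReal_sum (fun a _ => measure_ne_top ν _)
    obtain ⟨w, hw0, hwR, hwrow, hwcol⟩ := real_hall R f g
      (fun x => ENNReal.toReal_nonneg) (fun y => ENNReal.toReal_nonneg) hfsum hgsum hhall
    set π : Measure (X × X) := ∑ p : X × X, ENNReal.ofReal (w p.1 p.2) • Measure.dirac p
      with hπdef
    have hπapp : ∀ s : Set (X × X),
        π s = ∑ p : X × X, if p ∈ s then ENNReal.ofReal (w p.1 p.2) else 0 := by
      intro s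
      rw [hπdef, Measure.finset_sum_apply]
      refine Finset.sum_congr rfl fun p _ => ?_
      rw [Measure.smul_apply, Measure.dirac_apply' _ (hmXX s), smul_eq_mul]
      by_cases hps : p ∈ s
      · simp [Set.indicator_of_mem hps, hps]
      · simp [Set.indicator_of_notMem hps, hps]
    have hπfst : π.map Prod.fst = μ := by
      apply Measure.ext_of_singleton
      intro x
      rw [Measure.map_apply measurable_fst (hmX _), hπapp]
      have : ∀ p : X × X, (p ∈ Prod.fst ⁻¹' {x}) ↔ p.1 = x := by intro p; simp
      calc ∑ p : X × X, (if p ∈ Prod.fst ⁻¹' ({x} : Set X) then ENNReal.ofReal (w p.1 p.2) else 0)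
          = ∑ x' : X, ∑ y : X, (if x' = x then ENNReal.ofReal (w x' y) else 0) := by
            rw [Fintype.sum_prod_type]
            exact Finset.sum_congr rfl fun x' _ => Finset.sum_congr rfl fun y _ => by simp
        _ = ∑ y : X, ENNReal.ofReal (w x y) := by
            rw [Finset.sum_comm]
            refine Finset.sum_congr rfl fun y _ => ?_
            simp
        _ = ENNReal.ofReal (∑ y : X, w x y) :=
            (ENNReal.ofReal_sum_of_nonneg (fun y _ => hw0 x y)).symm
        _ = μ {x} := by rw [hwrow x, hf, ENNReal.ofReal_toReal (measure_ne_top μ _)]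
    have hπsnd : π.map Prod.snd = ν := by
      apply Measure.ext_of_singleton
      intro y
      rw [Measure.map_apply measurable_snd (hmX _), hπapp]
      calc ∑ p : X × X, (if p ∈ Prod.snd ⁻¹' ({y} : Set X) then ENNReal.ofReal (w p.1 p.2) else 0)
          = ∑ x : X, ∑ y' : X, (if y' = y then ENNReal.ofReal (w x y') else 0) := by
            rw [Fintype.sum_prod_type]
            exact Finset.sum_congr rfl fun x _ => Finset.sum_congr rfl fun y' _ => by simp
        _ = ∑ x : X, ENNReal.ofReal (w x y) := by
            refine Finset.sum_congr rfl fun x _ => ?_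
            simp
        _ = ENNReal.ofReal (∑ x : X, w x y) :=
            (ENNReal.ofReal_sum_of_nonneg (fun x _ => hw0 x y)).symm
        _ = ν {y} := by rw [hwcol y, hg, ENNReal.ofReal_toReal (measure_ne_top ν _)]
    have hπY : π Yᶜ = 0 := by
      rw [hπapp]
      apply Finset.sum_eq_zero
      intro p _
      by_cases hp : p ∈ Yᶜ
      · have : w p.1 p.2 = 0 := by
          by_contra hne
          exact hp (hwR p.1 p.2 hne)
        simp [hp, this]
      · simp [hp]
    have hπprob : IsProbabilityMeasure π := by
      constructor
      rw [hπapp]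
      simp only [Set.mem_univ, if_true]
      calc ∑ p : X × X, ENNReal.ofReal (w p.1 p.2)
          = ∑ x : X, ∑ y : X, ENNReal.ofReal (w x y) := by rw [Fintype.sum_prod_type]
        _ = ∑ x : X, ENNReal.ofReal (∑ y : X, w x y) :=
            Finset.sum_congr rfl fun x _ =>
              (ENNReal.ofReal_sum_of_nonneg (fun y _ => hw0 x y)).symm
        _ = ∑ x : X, μ {x} := Finset.sum_congr rfl fun x _ => by
              rw [hwrow x, hf, ENNReal.ofReal_toReal (measure_ne_top μ _)]
        _ = 1 := by
            have h1 : μ Set.univ = ∑ x, μ {x} := by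
              rw [meas_eq_sum μ Set.univ]
              simp
            rw [← h1, measure_univ]
    exact ⟨π, hπprob, hπfst, hπsnd, hπY⟩
end
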